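/- arXiv:2004.10559 — 4 statements merged into one kernel-verified Lean document; each statement's English description precedes it below -/
import Mathlib

section
/- (Hoeffding's inequality for infinitely many summands.) Let (X_k)_{k≥1} be i.i.d. random variables with P(X_1 = 1) = P(X_1 = -1) = 1/2, and let (a_k)_{k≥1} be real numbers with 0 < ∑_{k=1}^∞ a_k² < ∞. Then for every λ > 0, P(∑_{k=1}^∞ a_k X_k ≥ λ) ≤ exp(−λ²/(2·∑_{k=1}^∞ a_k²)). -/
open MeasureTheory ProbabilityTheory Filter Topology

open Real


lemma sign_integral_exp
    {Ω : Type*} [MeasurableSpace Ω] (μ : Measure Ω) [IsProbabilityMeasure μ]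
    (X : Ω → ℝ) (hm : Measurable X)
    (h1 : μ {ω | X ω = 1} = 1/2) (h2 : μ {ω | X ω = -1} = 1/2) (c : ℝ) :
    Integrable (fun ω => exp (c * X ω)) μ ∧
      ∫ ω, exp (c * X ω) ∂μ = cosh c := by
  set A : Set Ω := {ω | X ω = 1} with hA
  set B : Set Ω := {ω | X ω = -1} with hB
  have hAm : MeasurableSet A := hm (measurableSet_singleton 1)
  have hBm : MeasurableSet B := hm (measurableSet_singleton (-1))
  have hdisj : Disjoint A B := by
    rw [Set.disjoint_left]
    intro ω hω1 hω2
    simp only [hA, hB, Set.mem_setOf_eq] at hω1 hω2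
    norm_num [hω1] at hω2
  have hunion : μ (A ∪ B) = 1 := by
    rw [measure_union hdisj hBm, h1, h2, ENNReal.div_add_div_same]
    norm_num [ENNReal.div_self]
  have hae : ∀ᵐ ω ∂μ, ω ∈ A ∪ B := by
    have : μ (A ∪ B)ᶜ = 0 := by
      rw [measure_compl (hAm.union hBm) (measure_ne_top _ _), hunion, measure_univ]
      simp
    exact (ae_iff.2 this)
  set g : Ω → ℝ := fun ω => A.indicator (fun _ => exp c) ω + B.indicator (fun _ => exp (-c)) ω
    with hg
  have heq : (fun ω => exp (c * X ω)) =ᵐ[μ] g := by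
    filter_upwards [hae] with ω hω
    rcases hω with hω | hω
    · have hnB : ω ∉ B := fun h => Set.disjoint_left.1 hdisj hω h
      simp only [hg, Set.indicator_of_mem hω, Set.indicator_of_notMem hnB, add_zero]
      simp only [hA, Set.mem_setOf_eq] at hω
      rw [hω, mul_one]
    · have hnA : ω ∉ A := fun h => Set.disjoint_left.1 hdisj h hω
      simp only [hg, Set.indicator_of_mem hω, Set.indicator_of_notMem hnA, zero_add]
      simp only [hB, Set.mem_setOf_eq] at hω
      rw [hω]
      ring_nf
  have hgint : Integrable g μ := by
    apply Integrable.add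
    · exact (integrable_const _).indicator hAm
    · exact (integrable_const _).indicator hBm
  constructor
  · exact hgint.congr heq.symm
  · rw [integral_congr_ae heq, hg]
    rw [integral_add ((integrable_const _).indicator hAm) ((integrable_const _).indicator hBm),
      integral_indicator_const _ hAm, integral_indicator_const _ hBm, measureReal_def, measureReal_def, h1, h2, Real.cosh_eq]
    simp [ENNReal.toReal_div]
    ring

/-- Hoeffding's inequality for infinitely many summands: for i.i.d. signs `X_k` and
reals `a_k` with `0 < ∑ a_k² < ∞`, if `S = ∑_{k=1}^∞ a_k X_k` (the a.s. limit of the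
partial sums), then for every `λ > 0`,
`P(S ≥ λ) ≤ exp(-λ²/(2 ∑ a_k²))`. -/
theorem hoeffding_inequality_infinite
    {Ω : Type*} [MeasurableSpace Ω] (μ : Measure Ω) [IsProbabilityMeasure μ]
    (X : ℕ → Ω → ℝ) (hmeas : ∀ n, Measurable (X n))
    (hindep : iIndepFun X μ)
    (h1 : ∀ n, μ {ω | X n ω = 1} = 1/2) (h2 : ∀ n, μ {ω | X n ω = -1} = 1/2)
    (a : ℕ → ℝ) (ha : Summable (fun k => (a k) ^ 2)) (hapos : 0 < ∑' k : ℕ, (a k) ^ 2)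
    (S : Ω → ℝ)
    (hS : ∀ᵐ ω ∂μ,
      Tendsto (fun N : ℕ => ∑ k ∈ Finset.range N, a k * X k ω) atTop (𝓝 (S ω)))
    (lam : ℝ) (hlam : 0 < lam) :
    μ {ω | lam ≤ S ω} ≤ ENNReal.ofReal (Real.exp (-lam ^ 2 / (2 * ∑' k : ℕ, (a k) ^ 2))) := by
  set σ2 : ℝ := ∑' k : ℕ, (a k) ^ 2 with hσ2
  set t : ℝ := lam / σ2 with htdef
  have ht : 0 < t := div_pos hlam hapos
  set Y : ℕ → Ω → ℝ := fun k ω => a k * X k ω with hY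
  have hYmeas : ∀ k, Measurable (Y k) := fun k => (hmeas k).const_mul (a k)
  have hYindep : iIndepFun Y μ :=
    hindep.comp (fun k x => a k * x) (fun k => measurable_const_mul _)
  have haux : ∀ k, Integrable (fun ω => exp ((t * a k) * X k ω)) μ ∧
      ∫ ω, exp ((t * a k) * X k ω) ∂μ = cosh (t * a k) :=
    fun k => sign_integral_exp μ (X k) (hmeas k) (h1 k) (h2 k) (t * a k)
  have hint : ∀ k, Integrable (fun ω => exp (t * Y k ω)) μ := by
    intro k
    have := (haux k).1
    simpa [hY, mul_assoc] using this
  have hmgfY : ∀ k, mgf (Y k) μ t = cosh (t * a k) := by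
    intro k
    rw [mgf]
    have := (haux k).2
    simpa [hY, mul_assoc] using this
  -- bound on partial-sum integrals
  have hintN : ∀ N : ℕ, Integrable (fun ω => exp (t * ∑ k ∈ Finset.range N, a k * X k ω)) μ := by
    intro N
    have := hYindep.integrable_exp_mul_sum hYmeas (s := Finset.range N) (fun i _ => hint i)
    simpa [Finset.sum_apply] using this
  have hbound : ∀ N : ℕ,
      ∫ ω, exp (t * ∑ k ∈ Finset.range N, a k * X k ω) ∂μ ≤ exp (t ^ 2 * σ2 / 2) := by
    intro N
    have hmg := hYindep.mgf_sum hYmeas (Finset.range N) (t := t)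
    have h0 : ∫ ω, exp (t * ∑ k ∈ Finset.range N, a k * X k ω) ∂μ
        = mgf (∑ k ∈ Finset.range N, Y k) μ t := by
      rw [mgf]
      simp [Finset.sum_apply, hY]
    rw [h0, hmg]
    calc ∏ k ∈ Finset.range N, mgf (Y k) μ t
        = ∏ k ∈ Finset.range N, cosh (t * a k) :=
          Finset.prod_congr rfl (fun k _ => hmgfY k)
      _ ≤ ∏ k ∈ Finset.range N, exp ((t * a k) ^ 2 / 2) :=
          Finset.prod_le_prod (fun k _ => (Real.cosh_pos _).le)
            (fun k _ => Real.cosh_le_exp_half_sq _)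
      _ = exp (∑ k ∈ Finset.range N, (t * a k) ^ 2 / 2) := (Real.exp_sum _ _).symm
      _ ≤ exp (t ^ 2 * σ2 / 2) := by
          apply Real.exp_le_exp.2
          have h1' : ∑ k ∈ Finset.range N, (t * a k) ^ 2 / 2
              = t ^ 2 / 2 * ∑ k ∈ Finset.range N, (a k) ^ 2 := by
            rw [Finset.mul_sum]
            exact Finset.sum_congr rfl (fun k _ => by ring)
          rw [h1']
          have h2' : ∑ k ∈ Finset.range N, (a k) ^ 2 ≤ σ2 :=
            Summable.sum_le_tsum (Finset.range N) (fun k _ => sq_nonneg _) ha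
          have : (0:ℝ) ≤ t ^ 2 / 2 := by positivity
          nlinarith
  -- measurability
  have hmN : ∀ N : ℕ, Measurable (fun ω => ∑ k ∈ Finset.range N, a k * X k ω) :=
    fun N => Finset.measurable_sum _ (fun k _ => (hmeas k).const_mul (a k))
  have hSmeas : AEMeasurable S μ :=
    aemeasurable_of_tendsto_metrizable_ae atTop (fun N => (hmN N).aemeasurable) hS
  -- Fatou
  have hfat : ∫⁻ ω, ENNReal.ofReal (exp (t * S ω)) ∂μ
      ≤ ENNReal.ofReal (exp (t ^ 2 * σ2 / 2)) := by
    have hliminf : (fun ω => ENNReal.ofReal (exp (t * S ω))) =ᵐ[μ]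
        (fun ω => liminf (fun N : ℕ =>
          ENNReal.ofReal (exp (t * ∑ k ∈ Finset.range N, a k * X k ω))) atTop) := by
      filter_upwards [hS] with ω hω
      have : Tendsto (fun N : ℕ =>
          ENNReal.ofReal (exp (t * ∑ k ∈ Finset.range N, a k * X k ω))) atTop
          (𝓝 (ENNReal.ofReal (exp (t * S ω)))) :=
        (ENNReal.continuous_ofReal.tendsto _).comp
          ((Real.continuous_exp.tendsto _).comp ((hω.const_mul t)))
      exact this.liminf_eq.symm
    calc ∫⁻ ω, ENNReal.ofReal (exp (t * S ω)) ∂μ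
        = ∫⁻ ω, liminf (fun N : ℕ =>
            ENNReal.ofReal (exp (t * ∑ k ∈ Finset.range N, a k * X k ω))) atTop ∂μ :=
          lintegral_congr_ae hliminf
      _ ≤ liminf (fun N : ℕ => ∫⁻ ω,
            ENNReal.ofReal (exp (t * ∑ k ∈ Finset.range N, a k * X k ω)) ∂μ) atTop :=
          lintegral_liminf_le (fun N => (((hmN N).const_mul t).exp).ennreal_ofReal)
      _ ≤ ENNReal.ofReal (exp (t ^ 2 * σ2 / 2)) := by
          apply liminf_le_of_le
          · isBoundedDefault
          intro b hb
          rcases (hb.and (Eventually.of_forall (fun N : ℕ => trivial))).exists with ⟨N, hN, -⟩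
          refine le_trans hN ?_
          rw [← ofReal_integral_eq_lintegral_ofReal (hintN N)
            (ae_of_all _ (fun ω => (Real.exp_pos _).le))]
          exact ENNReal.ofReal_le_ofReal (hbound N)
  -- Markov
  have hmarkov := mul_meas_ge_le_lintegral₀
    ((Real.measurable_exp.comp_aemeasurable (hSmeas.const_mul t)).ennreal_ofReal) (ENNReal.ofReal (exp (t * lam)))
  have hsub : μ {ω | lam ≤ S ω}
      ≤ μ {ω | ENNReal.ofReal (exp (t * lam)) ≤ ENNReal.ofReal (exp (t * S ω))} := by
    apply measure_mono
    intro ω hω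
    simp only [Set.mem_setOf_eq] at hω ⊢
    exact ENNReal.ofReal_le_ofReal (Real.exp_le_exp.2 (by nlinarith))
  have hkey : ENNReal.ofReal (exp (t * lam)) * μ {ω | lam ≤ S ω}
      ≤ ENNReal.ofReal (exp (t ^ 2 * σ2 / 2)) := by
    calc ENNReal.ofReal (exp (t * lam)) * μ {ω | lam ≤ S ω}
        ≤ ENNReal.ofReal (exp (t * lam)) *
            μ {ω | ENNReal.ofReal (exp (t * lam)) ≤ ENNReal.ofReal (exp (t * S ω))} :=
          mul_le_mul_right hsub _
      _ ≤ ∫⁻ ω, ENNReal.ofReal (exp (t * S ω)) ∂μ := hmarkov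
      _ ≤ _ := hfat
  have hεpos : ENNReal.ofReal (exp (t * lam)) ≠ 0 := by
    simp [ENNReal.ofReal_eq_zero, not_le, Real.exp_pos]
  have hεtop : ENNReal.ofReal (exp (t * lam)) ≠ ⊤ := ENNReal.ofReal_ne_top
  have hdiv : μ {ω | lam ≤ S ω}
      ≤ ENNReal.ofReal (exp (t ^ 2 * σ2 / 2)) / ENNReal.ofReal (exp (t * lam)) := by
    rw [ENNReal.le_div_iff_mul_le (Or.inl hεpos) (Or.inl hεtop), mul_comm]
    exact hkey
  refine hdiv.trans (le_of_eq ?_)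
  rw [← ENNReal.ofReal_div_of_pos (Real.exp_pos _), ← Real.exp_sub]
  congr 1
  have hσne : σ2 ≠ 0 := ne_of_gt hapos
  rw [htdef]
  field_simp
  ring
end

section
/- For every σ > 1/2 and every real t, exp(t²/2 − t⁴π²/(48·V(σ)²)) ≤ E[exp(t·F̄(σ))] ≤ exp(t²/2). -/
open MeasureTheory ProbabilityTheory Filter Topology
open scoped ENNReal
section AuxSection

lemma exp_quad_le_one_add {y : ℝ} (hy : 0 ≤ y) : Real.exp (y - y^2/2) ≤ 1 + y := by
  rcases le_or_gt y 1 with h1 | h1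
  · have hz0 : 0 ≤ y - y^2/2 := by nlinarith
    have hz1 : |y - y^2/2| ≤ 1 := by rw [abs_of_nonneg hz0]; nlinarith
    have hb := Real.exp_bound hz1 (by norm_num : 0 < 3)
    have hsum : ∑ i ∈ Finset.range 3, (y - y^2/2) ^ i / (Nat.factorial i : ℝ)
        = 1 + (y - y^2/2) + (y - y^2/2)^2/2 := by
      norm_num [Finset.sum_range_succ, Nat.factorial]
    rw [hsum, abs_of_nonneg hz0] at hb
    have hb2 := (abs_le.1 hb).2
    have hc : ((Nat.succ 3 : ℕ) : ℝ) / ((Nat.factorial 3 : ℕ) * (3:ℕ)) = 2/9 := by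
      norm_num [Nat.factorial]
    rw [hc] at hb2
    nlinarith [pow_nonneg hy 3, pow_nonneg hy 4, sq_nonneg y, sq_nonneg (y*y)]
  · have h2 : y - y^2/2 ≤ 1/2 := by nlinarith
    have h3 : Real.exp (y - y^2/2) ≤ Real.exp (1/2) := Real.exp_le_exp.2 h2
    have he : Real.exp (1/2) ≤ 2 := by
      have h4 : Real.exp (1/2) ^ 2 = Real.exp 1 := by
        rw [← Real.exp_nat_mul]; norm_num
      nlinarith [Real.exp_one_lt_d9, Real.exp_pos (1/2 : ℝ)]
    linarith

lemma one_add_sq_le_cosh (x : ℝ) : 1 + x^2/2 ≤ Real.cosh x := by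
  rw [Real.cosh_eq_tsum]
  have hs := x.hasSum_cosh.summable
  have h2 := Summable.sum_le_tsum (Finset.range 2) (fun i _ => by
    rw [pow_mul]; positivity) hs
  have he : ∑ i ∈ Finset.range 2, x ^ (2*i) / (Nat.factorial (2*i) : ℝ) = 1 + x^2/2 := by
    norm_num [Finset.sum_range_succ, Nat.factorial]
  linarith [he ▸ h2]

lemma exp_le_cosh (x : ℝ) : Real.exp (x^2/2 - x^4/8) ≤ Real.cosh x := by
  have h := exp_quad_le_one_add (y := x^2/2) (by positivity)
  have he : x^2/2 - (x^2/2)^2/2 = x^2/2 - x^4/8 := by ring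
  rw [he] at h
  exact h.trans (one_add_sq_le_cosh x)

variable {Ω : Type*} [MeasurableSpace Ω] {μ : Measure Ω} [IsProbabilityMeasure μ]

variable {Ω : Type*} [MeasurableSpace Ω] {μ : Measure Ω} [IsProbabilityMeasure μ]

lemma pm_ae {X : Ω → ℝ} (hX : Measurable X)
    (h1 : μ {ω | X ω = 1} = 1/2) (h2 : μ {ω | X ω = -1} = 1/2) :
    ∀ᵐ ω ∂μ, X ω = 1 ∨ X ω = -1 := by
  have hA : MeasurableSet {ω | X ω = 1} := hX (measurableSet_singleton 1)
  have hB : MeasurableSet {ω | X ω = -1} := hX (measurableSet_singleton (-1))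
  have hdisj : Disjoint {ω | X ω = 1} {ω | X ω = -1} := by
    rw [Set.disjoint_left]; rintro ω (h : X ω = 1) (h' : X ω = -1); rw [h] at h'; norm_num at h'
  have hU : μ ({ω | X ω = 1} ∪ {ω | X ω = -1}) = 1 := by
    rw [measure_union hdisj hB, h1, h2, one_div (2:ℝ≥0∞), ENNReal.inv_two_add_inv_two]
  have h0 : μ ({ω | X ω = 1} ∪ {ω | X ω = -1})ᶜ = 0 := by
    rw [measure_compl (hA.union hB) (measure_ne_top _ _), hU, measure_univ, tsub_self]
  have hmem := measure_eq_zero_iff_ae_notMem.1 h0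
  filter_upwards [hmem] with ω hω
  exact Set.notMem_compl_iff.1 hω

lemma integral_pm {X : Ω → ℝ} (hX : Measurable X)
    (h1 : μ {ω | X ω = 1} = 1/2) (h2 : μ {ω | X ω = -1} = 1/2) (f : ℝ → ℝ) :
    ∫ ω, f (X ω) ∂μ = (f 1 + f (-1))/2 := by
  have hA : MeasurableSet {ω | X ω = 1} := hX (measurableSet_singleton 1)
  have hAc : μ {ω | X ω = 1}ᶜ = 1/2 := by
    rw [measure_compl hA (measure_ne_top _ _), measure_univ, h1, one_div (2:ℝ≥0∞),
      ENNReal.one_sub_inv_two, ← one_div (2:ℝ≥0∞)]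
  have hint1 : Integrable ({ω | X ω = 1}.indicator (fun _ => f 1)) μ :=
    (integrable_const (f 1)).indicator hA
  have hint2 : Integrable ({ω | X ω = 1}ᶜ.indicator (fun _ => f (-1))) μ :=
    (integrable_const (f (-1))).indicator hA.compl
  have hae : (fun ω => f (X ω)) =ᵐ[μ]
      (fun ω => Set.indicator {ω | X ω = 1} (fun _ => f 1) ω
        + Set.indicator {ω | X ω = 1}ᶜ (fun _ => f (-1)) ω) := by
    filter_upwards [pm_ae hX h1 h2] with ω hω
    rcases hω with h | h
    · have hm : ω ∈ {ω | X ω = 1} := h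
      simp [Set.indicator_of_mem hm,
        Set.indicator_of_notMem (by simp [hm] : ω ∉ {ω | X ω = 1}ᶜ), h]
    · have hne : ω ∉ {ω | X ω = 1} := by simp only [Set.mem_setOf_eq, h]; norm_num
      simp [Set.indicator_of_notMem hne, Set.indicator_of_mem (Set.mem_compl hne), h]
  rw [integral_congr_ae hae, integral_add hint1 hint2, integral_indicator_const _ hA,
    integral_indicator_const _ hA.compl, measureReal_def, measureReal_def, h1, hAc]
  simp [ENNReal.toReal_div]
  ring

variable {X : ℕ → Ω → ℝ}

lemma exp_prod_eq (hmeas : ∀ n, Measurable (X n))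
    (hindep : iIndepFun X μ)
    (h1 : ∀ n, μ {ω | X n ω = 1} = 1/2) (h2 : ∀ n, μ {ω | X n ω = -1} = 1/2)
    (c : ℕ → ℝ) (u : ℝ) (I : Finset ℕ) :
    ∫ ω, Real.exp (u * ∑ n ∈ I, X n ω * c n) ∂μ = ∏ n ∈ I, Real.cosh (u * c n) := by
  have hY : iIndepFun (fun n => fun ω => X n ω * c n) μ := by
    have := hindep.comp (fun n => fun x : ℝ => x * c n)
      (fun n => measurable_id.mul_const (c n))
    exact this
  have hYmeas : ∀ n, Measurable (fun ω => X n ω * c n) :=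
    fun n => (hmeas n).mul_const (c n)
  have := hY.mgf_sum hYmeas I (t := u)
  have hsum : (∑ n ∈ I, fun ω => X n ω * c n) = fun ω => ∑ n ∈ I, X n ω * c n := by
    funext ω; simp [Finset.sum_apply]
  rw [hsum] at this
  rw [show (∫ ω, Real.exp (u * ∑ n ∈ I, X n ω * c n) ∂μ)
      = mgf (fun ω => ∑ n ∈ I, X n ω * c n) μ u from rfl, this]
  refine Finset.prod_congr rfl fun n _ => ?_
  have : mgf (fun ω => X n ω * c n) μ u
      = ∫ ω, (fun x => Real.exp (u * (x * c n))) (X n ω) ∂μ := rfl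
  rw [this, integral_pm (hmeas n) (h1 n) (h2 n) (fun x => Real.exp (u * (x * c n))),
    Real.cosh_eq]
  norm_num

lemma integrable_of_ae_bound {f : Ω → ℝ} (hm : AEStronglyMeasurable f μ) {C : ℝ}
    (h : ∀ᵐ ω ∂μ, |f ω| ≤ C) : Integrable f μ :=
  (integrable_const C).mono' hm (by simpa [Real.norm_eq_abs] using h)

lemma sq_sum_eq (hmeas : ∀ n, Measurable (X n))
    (hindep : iIndepFun X μ)
    (h1 : ∀ n, μ {ω | X n ω = 1} = 1/2) (h2 : ∀ n, μ {ω | X n ω = -1} = 1/2)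
    (c : ℕ → ℝ) (I : Finset ℕ) :
    ∫ ω, (∑ n ∈ I, X n ω * c n)^2 ∂μ = ∑ n ∈ I, (c n)^2 := by
  have habs : ∀ n, ∀ᵐ ω ∂μ, |X n ω| = 1 := by
    intro n
    filter_upwards [pm_ae (hmeas n) (h1 n) (h2 n)] with ω hω
    rcases hω with h | h <;> simp [h]
  have hint : ∀ n m : ℕ, Integrable (fun ω => (X n ω * c n) * (X m ω * c m)) μ := by
    intro n m
    refine integrable_of_ae_bound
      ((((hmeas n).mul_const _).mul ((hmeas m).mul_const _)).aestronglyMeasurable)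
      (C := |c n| * |c m|) ?_
    filter_upwards [habs n, habs m] with ω hn hm
    calc |X n ω * c n * (X m ω * c m)| = |X n ω| * |X m ω| * (|c n| * |c m|) := by
          rw [abs_mul, abs_mul, abs_mul]; ring
      _ = |c n| * |c m| := by rw [hn, hm]; ring
      _ ≤ |c n| * |c m| := le_rfl
  have hterm : ∀ n ∈ I, ∀ m ∈ I, ∫ ω, (X n ω * c n) * (X m ω * c m) ∂μ
      = if m = n then (c n)^2 else 0 := by
    intro n _ m _
    rcases eq_or_ne m n with rfl | hne
    · simp only [if_pos rfl]
      have : (fun ω => (X m ω * c m) * (X m ω * c m)) =ᵐ[μ] (fun _ => (c m)^2) := by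
        filter_upwards [habs m] with ω hω
        have : (X m ω)^2 = 1 := by rcases abs_eq (by norm_num : (0:ℝ) ≤ 1) |>.1 hω with h | h <;> nlinarith
        nlinarith [this]
      rw [integral_congr_ae this, integral_const]
      simp
    · simp only [if_neg hne]
      have hindnm : IndepFun (fun ω => X n ω * c n) (fun ω => X m ω * c m) μ := by
        have h0 : IndepFun (X n) (X m) μ := hindep.indepFun (Ne.symm hne)
        exact h0.comp (measurable_id.mul_const (c n)) (measurable_id.mul_const (c m))
      have hIn : Integrable (fun ω => X n ω * c n) μ := by
        refine integrable_of_ae_bound (((hmeas n).mul_const _).aestronglyMeasurable) (C := |c n|) ?_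
        filter_upwards [habs n] with ω hω
        rw [abs_mul, hω, one_mul]
      have hIm : Integrable (fun ω => X m ω * c m) μ := by
        refine integrable_of_ae_bound (((hmeas m).mul_const _).aestronglyMeasurable) (C := |c m|) ?_
        filter_upwards [habs m] with ω hω
        rw [abs_mul, hω, one_mul]
      have := hindnm.integral_fun_mul_eq_mul_integral hIn.aestronglyMeasurable hIm.aestronglyMeasurable
      have hzn : ∫ ω, X n ω * c n ∂μ = 0 := by
        rw [integral_pm (hmeas n) (h1 n) (h2 n) (fun x => x * c n)]
        ring
      calc ∫ ω, (X n ω * c n) * (X m ω * c m) ∂μ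
          = (∫ ω, X n ω * c n ∂μ) * ∫ ω, X m ω * c m ∂μ := this
        _ = 0 := by rw [hzn, zero_mul]
  calc ∫ ω, (∑ n ∈ I, X n ω * c n)^2 ∂μ
      = ∫ ω, ∑ n ∈ I, ∑ m ∈ I, (X n ω * c n) * (X m ω * c m) ∂μ := by
        congr 1; funext ω; rw [sq, Finset.sum_mul_sum]
    _ = ∑ n ∈ I, ∑ m ∈ I, ∫ ω, (X n ω * c n) * (X m ω * c m) ∂μ := by
        rw [integral_finset_sum _ (fun n _ => integrable_finset_sum _ (fun m _ => hint n m))]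
        exact Finset.sum_congr rfl fun n _ => integral_finset_sum _ (fun m _ => hint n m)
    _ = ∑ n ∈ I, (c n)^2 := by
        refine Finset.sum_congr rfl fun n hn => ?_
        rw [Finset.sum_congr rfl (hterm n hn), Finset.sum_ite_eq' I n (fun m => (c n)^2)]
        simp [hn]

lemma abs_exp_sub_exp (a b : ℝ) :
    |Real.exp a - Real.exp b| ≤ |a - b| * (Real.exp a + Real.exp b) := by
  rcases le_total a b with h | h
  · have h1 := Real.add_one_le_exp (a - b)
    have h2 : Real.exp (a - b) * Real.exp b = Real.exp a := by
      rw [← Real.exp_add]; ring_nf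
    rw [abs_of_nonpos (by simp [Real.exp_le_exp, h] : Real.exp a - Real.exp b ≤ 0),
      abs_of_nonpos (by linarith : a - b ≤ 0)]
    nlinarith [Real.exp_pos b, Real.exp_pos a]
  · have h1 := Real.add_one_le_exp (b - a)
    have h2 : Real.exp (b - a) * Real.exp a = Real.exp b := by
      rw [← Real.exp_add]; ring_nf
    rw [abs_of_nonneg (by simp [Real.exp_le_exp, h] : 0 ≤ Real.exp a - Real.exp b),
      abs_of_nonneg (by linarith : 0 ≤ a - b)]
    nlinarith [Real.exp_pos b, Real.exp_pos a]

end AuxSection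

open MeasureTheory ProbabilityTheory Filter Topology
open scoped ENNReal

/-- `V σ = E[F(σ)²] = ∑_{n=1}^∞ n^{-2σ}`. -/
noncomputable def V (σ : ℝ) : ℝ := ∑' n : ℕ, (n : ℝ) ^ (-(2 * σ))

set_option maxHeartbeats 2000000 in
/-- For `σ > 1/2` and `t ∈ ℝ`,
`exp(t²/2 - t⁴π²/(48 V(σ)²)) ≤ E[exp(t F̄(σ))] ≤ exp(t²/2)`,
where `F̄(σ) = F(σ)/√V(σ)`. -/
theorem mgf_bounds_normalized_dirichlet
    {Ω : Type*} [MeasurableSpace Ω] (μ : Measure Ω) [IsProbabilityMeasure μ]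
    (X : ℕ → Ω → ℝ) (hmeas : ∀ n, Measurable (X n))
    (hindep : iIndepFun X μ)
    (h1 : ∀ n, μ {ω | X n ω = 1} = 1/2) (h2 : ∀ n, μ {ω | X n ω = -1} = 1/2)
    (F : ℝ → Ω → ℝ)
    (hF : ∀ σ : ℝ, 1/2 < σ → ∀ᵐ ω ∂μ,
      Tendsto (fun N : ℕ => ∑ n ∈ Finset.range N, X n ω * (n : ℝ) ^ (-σ))
        atTop (𝓝 (F σ ω)))
    (σ : ℝ) (hσ : 1/2 < σ) (t : ℝ) :
    Real.exp (t ^ 2 / 2 - t ^ 4 * Real.pi ^ 2 / (48 * (V σ) ^ 2)) ≤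
      ∫ ω, Real.exp (t * (F σ ω / Real.sqrt (V σ))) ∂μ ∧
    ∫ ω, Real.exp (t * (F σ ω / Real.sqrt (V σ))) ∂μ ≤ Real.exp (t ^ 2 / 2) := by
  -- notation
  set c : ℕ → ℝ := fun n => (n : ℝ) ^ (-σ) with hcdef
  have hcnn : ∀ n, 0 ≤ c n := fun n => Real.rpow_nonneg (Nat.cast_nonneg n) _
  have hcsq : ∀ n : ℕ, (c n) ^ 2 = (n : ℝ) ^ (-(2 * σ)) := by
    intro n
    rw [hcdef]
    rw [← Real.rpow_natCast ((n:ℝ) ^ (-σ)) 2, ← Real.rpow_mul (Nat.cast_nonneg n)]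
    norm_num
    ring_nf
  have hc4 : ∀ n : ℕ, (c n) ^ 4 = (n : ℝ) ^ (-(4 * σ)) := by
    intro n
    rw [hcdef]
    rw [← Real.rpow_natCast ((n:ℝ) ^ (-σ)) 4, ← Real.rpow_mul (Nat.cast_nonneg n)]
    norm_num
    ring_nf
  -- summability and V facts
  have hsumV : Summable (fun n : ℕ => (n : ℝ) ^ (-(2 * σ))) :=
    Real.summable_nat_rpow.2 (by linarith)
  have hsumc2 : Summable (fun n => (c n) ^ 2) := hsumV.congr fun n => (hcsq n).symm
  have htsum2 : ∑' n, (c n) ^ 2 = V σ := by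
    rw [V]; exact tsum_congr fun n => hcsq n
  have hsum4 : Summable (fun n : ℕ => (n : ℝ) ^ (-(4 * σ))) :=
    Real.summable_nat_rpow.2 (by linarith)
  have hsumc4 : Summable (fun n => (c n) ^ 4) := hsum4.congr fun n => (hc4 n).symm
  have hV1 : 1 ≤ V σ := by
    have h := Summable.le_tsum hsumV 1 (fun i _ => Real.rpow_nonneg (Nat.cast_nonneg i) _)
    rw [V]
    simpa using h
  have hVpos : 0 < V σ := lt_of_lt_of_le one_pos hV1
  have hsqrtpos : 0 < Real.sqrt (V σ) := Real.sqrt_pos.2 hVpos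
  have hsqV : (Real.sqrt (V σ)) ^ 2 = V σ := Real.sq_sqrt hVpos.le
  set s : ℝ := t / Real.sqrt (V σ) with hsdef
  have hs2 : s ^ 2 * V σ = t ^ 2 := by
    rw [hsdef, div_pow, hsqV, div_mul_cancel₀]
    exact hVpos.ne'
  have hs4 : s ^ 4 * (V σ) ^ 2 = t ^ 4 := by
    have : s ^ 4 * (V σ) ^ 2 = (s ^ 2 * V σ) ^ 2 := by ring
    rw [this, hs2]; ring
  -- Q = sum of 4th powers, bounded by π²/6
  set Q : ℝ := ∑' n, (c n) ^ 4 with hQdef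
  have hQnn : 0 ≤ Q := tsum_nonneg fun n => by positivity
  have hQle : Q ≤ Real.pi ^ 2 / 6 := by
    rw [hQdef, ← hasSum_zeta_two.tsum_eq]
    refine Summable.tsum_le_tsum (fun n => ?_) hsumc4 hasSum_zeta_two.summable
    rcases Nat.eq_zero_or_pos n with rfl | hn
    · have hc00 : c 0 = 0 := by
        rw [hcdef]; simp [Real.zero_rpow (show (-σ) ≠ 0 from ne_of_lt (by linarith))]
      rw [hc00]; norm_num
    · have hn1 : (1:ℝ) ≤ (n:ℝ) := by exact_mod_cast hn
      rw [hc4 n]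
      have : ((n:ℝ)) ^ (-(4*σ)) ≤ ((n:ℝ)) ^ (-(2:ℝ)) :=
        Real.rpow_le_rpow_of_exponent_le hn1 (by linarith)
      refine this.trans (le_of_eq ?_)
      rw [Real.rpow_neg (Nat.cast_nonneg n), ← Real.rpow_natCast (n:ℝ) 2]
      norm_num
  -- partial sums of c²
  have hP_le_V : ∀ N, ∑ n ∈ Finset.range N, (c n) ^ 2 ≤ V σ := by
    intro N
    rw [← htsum2]
    exact Summable.sum_le_tsum _ (fun n _ => by positivity) hsumc2
  have hPtend : Tendsto (fun N => ∑ n ∈ Finset.range N, (c n) ^ 2) atTop (𝓝 (V σ)) := by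
    rw [← htsum2]
    exact hsumc2.hasSum.tendsto_sum_nat
  -- the partial-sum process
  set S : ℕ → Ω → ℝ := fun N ω => ∑ n ∈ Finset.range N, X n ω * c n with hSdef
  have hmeasS : ∀ N, Measurable (S N) := by
    intro N
    exact Finset.measurable_sum _ (fun n _ => (hmeas n).mul_const _)
  have hFS : ∀ᵐ ω ∂μ, Tendsto (fun N => S N ω) atTop (𝓝 (F σ ω)) := hF σ hσ
  -- a.e. boundedness of X
  have habsX : ∀ᵐ ω ∂μ, ∀ n, |X n ω| = 1 := by
    rw [ae_all_iff]
    intro n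
    filter_upwards [pm_ae (hmeas n) (h1 n) (h2 n)] with ω hω
    rcases hω with h | h <;> simp [h]
  have hSbound : ∀ᵐ ω ∂μ, ∀ (I : Finset ℕ), |∑ n ∈ I, X n ω * c n| ≤ ∑ n ∈ I, c n := by
    filter_upwards [habsX] with ω hω I
    calc |∑ n ∈ I, X n ω * c n| ≤ ∑ n ∈ I, |X n ω * c n| := Finset.abs_sum_le_sum_abs _ _
      _ = ∑ n ∈ I, c n := Finset.sum_congr rfl fun n _ => by
          rw [abs_mul, hω n, one_mul, abs_of_nonneg (hcnn n)]
  -- integral identities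
  have hInt : ∀ (u : ℝ) (N : ℕ), ∫ ω, Real.exp (u * S N ω) ∂μ
      = ∏ n ∈ Finset.range N, Real.cosh (u * c n) :=
    fun u N => exp_prod_eq hmeas hindep h1 h2 c u _
  have hIntegrable : ∀ (u : ℝ) (I : Finset ℕ),
      Integrable (fun ω => Real.exp (u * ∑ n ∈ I, X n ω * c n)) μ := by
    intro u I
    refine integrable_of_ae_bound
      (Real.measurable_exp.comp ((Finset.measurable_sum _
        (fun n _ => (hmeas n).mul_const _)).const_mul u)).aestronglyMeasurable
      (C := Real.exp (|u| * ∑ n ∈ I, c n)) ?_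
    filter_upwards [hSbound] with ω hω
    rw [abs_of_pos (Real.exp_pos _), Real.exp_le_exp]
    calc u * ∑ n ∈ I, X n ω * c n ≤ |u * ∑ n ∈ I, X n ω * c n| := le_abs_self _
      _ = |u| * |∑ n ∈ I, X n ω * c n| := abs_mul _ _
      _ ≤ |u| * ∑ n ∈ I, c n := by
          exact mul_le_mul_of_nonneg_left (hω I) (abs_nonneg u)
  -- upper bound on the integrals of exp(u S N)
  have hUB : ∀ (u : ℝ) (N : ℕ), ∫ ω, Real.exp (u * S N ω) ∂μ
      ≤ Real.exp (u ^ 2 * V σ / 2) := by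
    intro u N
    rw [hInt u N]
    calc ∏ n ∈ Finset.range N, Real.cosh (u * c n)
        ≤ ∏ n ∈ Finset.range N, Real.exp ((u * c n) ^ 2 / 2) :=
          Finset.prod_le_prod (fun n _ => (Real.cosh_pos _).le)
            (fun n _ => Real.cosh_le_exp_half_sq _)
      _ = Real.exp (∑ n ∈ Finset.range N, (u * c n) ^ 2 / 2) := by
          rw [Real.exp_sum]
      _ ≤ Real.exp (u ^ 2 * V σ / 2) := by
          rw [Real.exp_le_exp]
          have : ∑ n ∈ Finset.range N, (u * c n) ^ 2 / 2
              = u ^ 2 / 2 * ∑ n ∈ Finset.range N, (c n) ^ 2 := by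
            rw [Finset.mul_sum]
            exact Finset.sum_congr rfl fun n _ => by ring
          rw [this]
          calc u ^ 2 / 2 * ∑ n ∈ Finset.range N, (c n) ^ 2
              ≤ u ^ 2 / 2 * V σ := by
                exact mul_le_mul_of_nonneg_left (hP_le_V N) (by positivity)
            _ = u ^ 2 * V σ / 2 := by ring
  -- lintegral bound
  have hlin : ∀ (u : ℝ) (N : ℕ), ∫⁻ ω, ENNReal.ofReal (Real.exp (u * S N ω)) ∂μ
      ≤ ENNReal.ofReal (Real.exp (u ^ 2 * V σ / 2)) := by
    intro u N
    rw [← ofReal_integral_eq_lintegral_ofReal (hIntegrable u _)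
      (Filter.Eventually.of_forall fun ω => (Real.exp_pos _).le)]
    exact ENNReal.ofReal_le_ofReal (hUB u N)
  -- the limiting random variable
  set g : Ω → ℝ := fun ω => Real.exp (s * F σ ω) with hgdef
  have hgnn : ∀ ω, 0 ≤ g ω := fun ω => (Real.exp_pos _).le
  have hFmeas : AEMeasurable (F σ) μ :=
    aemeasurable_of_tendsto_metrizable_ae atTop (fun N => (hmeasS N).aemeasurable) hFS
  have hgaem : AEMeasurable g μ :=
    Real.measurable_exp.comp_aemeasurable (hFmeas.const_mul s)
  have hgaesm : AEStronglyMeasurable g μ := hgaem.aestronglyMeasurable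
  set B : ℝ≥0∞ := ENNReal.ofReal (Real.exp ((2*s) ^ 2 * V σ / 2)) with hBdef
  have hBne : B ≠ ∞ := ENNReal.ofReal_ne_top
  have hsq_exp : ∀ (x : ℝ), (Real.exp x) ^ 2 = Real.exp (2 * x) := by
    intro x; rw [sq, ← Real.exp_add]; congr 1; ring
  have hL2N : ∀ N, ∫⁻ ω, ENNReal.ofReal ((Real.exp (s * S N ω)) ^ 2) ∂μ ≤ B := by
    intro N
    have heq : ∀ ω, (Real.exp (s * S N ω)) ^ 2 = Real.exp ((2*s) * S N ω) := by
      intro ω; rw [hsq_exp]; congr 1; ring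
    simp_rw [heq]
    exact hlin (2*s) N
  have hgL2 : ∫⁻ ω, ENNReal.ofReal ((g ω) ^ 2) ∂μ ≤ B := by
    have hmeasfN : ∀ N : ℕ, AEMeasurable
        (fun ω => ENNReal.ofReal ((Real.exp (s * S N ω)) ^ 2)) μ :=
      fun N => (ENNReal.measurable_ofReal.comp
        ((((hmeasS N).const_mul s).exp).pow_const 2)).aemeasurable
    calc ∫⁻ ω, ENNReal.ofReal ((g ω) ^ 2) ∂μ
        = ∫⁻ ω, liminf (fun N => ENNReal.ofReal ((Real.exp (s * S N ω)) ^ 2)) atTop ∂μ := by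
          refine lintegral_congr_ae ?_
          filter_upwards [hFS] with ω hω
          have htd : Tendsto (fun N => ENNReal.ofReal ((Real.exp (s * S N ω)) ^ 2)) atTop
              (𝓝 (ENNReal.ofReal ((g ω) ^ 2))) := by
            refine ENNReal.tendsto_ofReal ?_
            exact ((Real.continuous_exp.continuousAt.tendsto.comp (hω.const_mul s)).pow 2)
          exact htd.liminf_eq.symm
      _ ≤ liminf (fun N => ∫⁻ ω, ENNReal.ofReal ((Real.exp (s * S N ω)) ^ 2) ∂μ) atTop :=
          lintegral_liminf_le' hmeasfN
      _ ≤ B := (Filter.liminf_le_liminf (Filter.Eventually.of_forall hL2N)).trans_eq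
          (Filter.liminf_const B)
  have hgint : Integrable g μ := by
    refine ⟨hgaesm, ?_⟩
    rw [hasFiniteIntegral_iff_ofReal (Filter.Eventually.of_forall hgnn)]
    have hb1 : ∫⁻ ω, ENNReal.ofReal (g ω) ∂μ ≤ ∫⁻ ω, (1 + ENNReal.ofReal ((g ω) ^ 2)) ∂μ := by
      refine lintegral_mono fun ω => ?_
      rw [← ENNReal.ofReal_one, ← ENNReal.ofReal_add (by norm_num) (sq_nonneg _)]
      exact ENNReal.ofReal_le_ofReal (by nlinarith [hgnn ω])
    have hb2 : ∫⁻ ω, (1 + ENNReal.ofReal ((g ω) ^ 2)) ∂μ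
        = 1 + ∫⁻ ω, ENNReal.ofReal ((g ω) ^ 2) ∂μ := by
      rw [lintegral_add_left' aemeasurable_const, lintegral_const, measure_univ, mul_one]
    refine lt_of_le_of_lt (hb1.trans_eq hb2) ?_
    exact ENNReal.add_lt_top.2 ⟨ENNReal.one_lt_top, lt_of_le_of_lt hgL2 hBne.lt_top⟩
  -- second moment bound for the tails
  have hFS2 : ∀ N, ∫⁻ ω, ENNReal.ofReal ((F σ ω - S N ω) ^ 2) ∂μ
      ≤ ENNReal.ofReal (V σ - ∑ n ∈ Finset.range N, (c n) ^ 2) := by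
    intro N
    have hDint : ∀ M : ℕ, Integrable (fun ω => (S M ω - S N ω) ^ 2) μ := by
      intro M
      refine integrable_of_ae_bound
        ((((hmeasS M).sub (hmeasS N)).pow_const 2).aestronglyMeasurable)
        (C := (∑ n ∈ Finset.range M, c n + ∑ n ∈ Finset.range N, c n) ^ 2) ?_
      filter_upwards [hSbound] with ω hω
      rw [abs_of_nonneg (sq_nonneg _), ← sq_abs]
      have habs : |S M ω - S N ω| ≤ ∑ n ∈ Finset.range M, c n + ∑ n ∈ Finset.range N, c n :=
        (abs_sub _ _).trans (add_le_add (hω _) (hω _))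
      exact pow_le_pow_left₀ (abs_nonneg _) habs 2
    have hDval : ∀ M : ℕ, N ≤ M →
        ∫ ω, (S M ω - S N ω) ^ 2 ∂μ = ∑ n ∈ Finset.Ico N M, (c n) ^ 2 := by
      intro M hNM
      have heqf : (fun ω => (S M ω - S N ω) ^ 2)
          = fun ω => (∑ n ∈ Finset.Ico N M, X n ω * c n) ^ 2 := by
        funext ω
        rw [Finset.sum_Ico_eq_sub _ hNM]
      rw [heqf, sq_sum_eq hmeas hindep h1 h2 c _]
    have hlinM : ∀ M : ℕ, N ≤ M → ∫⁻ ω, ENNReal.ofReal ((S M ω - S N ω) ^ 2) ∂μ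
        = ENNReal.ofReal (∑ n ∈ Finset.Ico N M, (c n) ^ 2) := by
      intro M hNM
      rw [← ofReal_integral_eq_lintegral_ofReal (hDint M)
        (Filter.Eventually.of_forall fun ω => sq_nonneg _), hDval M hNM]
    have htendIco : Tendsto (fun M => ENNReal.ofReal (∑ n ∈ Finset.Ico N M, (c n) ^ 2)) atTop
        (𝓝 (ENNReal.ofReal (V σ - ∑ n ∈ Finset.range N, (c n) ^ 2))) := by
      refine ENNReal.tendsto_ofReal ?_
      refine (hPtend.sub_const _).congr' ?_
      filter_upwards [eventually_ge_atTop N] with M hM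
      rw [Finset.sum_Ico_eq_sub _ hM]
    have hmeasD : ∀ M : ℕ, AEMeasurable
        (fun ω => ENNReal.ofReal ((S M ω - S N ω) ^ 2)) μ :=
      fun M => (ENNReal.measurable_ofReal.comp
        (((hmeasS M).sub (hmeasS N)).pow_const 2)).aemeasurable
    calc ∫⁻ ω, ENNReal.ofReal ((F σ ω - S N ω) ^ 2) ∂μ
        = ∫⁻ ω, liminf (fun M => ENNReal.ofReal ((S M ω - S N ω) ^ 2)) atTop ∂μ := by
          refine lintegral_congr_ae ?_
          filter_upwards [hFS] with ω hω
          have htd : Tendsto (fun M => ENNReal.ofReal ((S M ω - S N ω) ^ 2)) atTop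
              (𝓝 (ENNReal.ofReal ((F σ ω - S N ω) ^ 2))) :=
            ENNReal.tendsto_ofReal ((hω.sub_const (S N ω)).pow 2)
          exact htd.liminf_eq.symm
      _ ≤ liminf (fun M => ∫⁻ ω, ENNReal.ofReal ((S M ω - S N ω) ^ 2) ∂μ) atTop :=
          lintegral_liminf_le' hmeasD
      _ = ENNReal.ofReal (V σ - ∑ n ∈ Finset.range N, (c n) ^ 2) := by
          refine Filter.Tendsto.liminf_eq ?_
          refine htendIco.congr' ?_
          filter_upwards [eventually_ge_atTop N] with M hM
          exact (hlinM M hM).symm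
  -- L¹ convergence
  have hptbound : ∀ N, ∫⁻ ω, (‖Real.exp (s * S N ω) - g ω‖₊ : ℝ≥0∞) ∂μ
      ≤ (ENNReal.ofReal (s ^ 2 * (V σ - ∑ n ∈ Finset.range N, (c n) ^ 2))) ^ (1/2 : ℝ)
        * ((4 : ℝ≥0∞) * B) ^ (1/2 : ℝ) := by
    intro N
    have hf1meas : AEMeasurable (fun ω => ENNReal.ofReal (|s| * |F σ ω - S N ω|)) μ := by
      exact ENNReal.measurable_ofReal.comp_aemeasurable
        ((measurable_abs.comp_aemeasurable (hFmeas.sub (hmeasS N).aemeasurable)).const_mul |s|)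
    have hf2meas : AEMeasurable (fun ω => ENNReal.ofReal (Real.exp (s * S N ω) + g ω)) μ := by
      exact ENNReal.measurable_ofReal.comp_aemeasurable
        ((((hmeasS N).const_mul s).exp.aemeasurable).add hgaem)
    have hstep1 : ∫⁻ ω, (‖Real.exp (s * S N ω) - g ω‖₊ : ℝ≥0∞) ∂μ
        ≤ ∫⁻ ω, (ENNReal.ofReal (|s| * |F σ ω - S N ω|))
            * (ENNReal.ofReal (Real.exp (s * S N ω) + g ω)) ∂μ := by
      refine lintegral_mono fun ω => ?_
      rw [← enorm_eq_nnnorm, Real.enorm_eq_ofReal_abs,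
        ← ENNReal.ofReal_mul (mul_nonneg (abs_nonneg _) (abs_nonneg _))]
      refine ENNReal.ofReal_le_ofReal ?_
      have h := abs_exp_sub_exp (s * S N ω) (s * F σ ω)
      calc |Real.exp (s * S N ω) - g ω|
          ≤ |s * S N ω - s * F σ ω| * (Real.exp (s * S N ω) + Real.exp (s * F σ ω)) := h
        _ = |s| * |F σ ω - S N ω| * (Real.exp (s * S N ω) + g ω) := by
            rw [show s * S N ω - s * F σ ω = s * (S N ω - F σ ω) by ring, abs_mul,
              abs_sub_comm (S N ω) (F σ ω), hgdef]
    have hstep2 := ENNReal.lintegral_mul_le_Lp_mul_Lq μ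
      Real.HolderConjugate.two_two hf1meas hf2meas
    have hstep3 : ∫⁻ ω, (ENNReal.ofReal (|s| * |F σ ω - S N ω|)) ^ (2:ℝ) ∂μ
        ≤ ENNReal.ofReal (s ^ 2 * (V σ - ∑ n ∈ Finset.range N, (c n) ^ 2)) := by
      have heq : ∀ ω, (ENNReal.ofReal (|s| * |F σ ω - S N ω|)) ^ (2:ℝ)
          = ENNReal.ofReal (s ^ 2) * ENNReal.ofReal ((F σ ω - S N ω) ^ 2) := by
        intro ω
        rw [ENNReal.rpow_two, ← ENNReal.ofReal_pow (mul_nonneg (abs_nonneg _) (abs_nonneg _)),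
          ← ENNReal.ofReal_mul (sq_nonneg s)]
        congr 1
        rw [mul_pow, sq_abs, sq_abs]
      simp_rw [heq]
      rw [lintegral_const_mul' _ _ ENNReal.ofReal_ne_top]
      calc ENNReal.ofReal (s ^ 2) * ∫⁻ ω, ENNReal.ofReal ((F σ ω - S N ω) ^ 2) ∂μ
          ≤ ENNReal.ofReal (s ^ 2)
            * ENNReal.ofReal (V σ - ∑ n ∈ Finset.range N, (c n) ^ 2) :=
            mul_le_mul_right (hFS2 N) _
        _ = ENNReal.ofReal (s ^ 2 * (V σ - ∑ n ∈ Finset.range N, (c n) ^ 2)) := by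
            rw [← ENNReal.ofReal_mul (sq_nonneg s)]
    have hstep4 : ∫⁻ ω, (ENNReal.ofReal (Real.exp (s * S N ω) + g ω)) ^ (2:ℝ) ∂μ
        ≤ (4 : ℝ≥0∞) * B := by
      have heq : ∀ ω, (ENNReal.ofReal (Real.exp (s * S N ω) + g ω)) ^ (2:ℝ)
          ≤ 2 * ENNReal.ofReal ((Real.exp (s * S N ω)) ^ 2)
            + 2 * ENNReal.ofReal ((g ω) ^ 2) := by
        intro ω
        rw [ENNReal.rpow_two,
          ← ENNReal.ofReal_pow (add_nonneg (Real.exp_pos _).le (hgnn ω))]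
        calc ENNReal.ofReal ((Real.exp (s * S N ω) + g ω) ^ 2)
            ≤ ENNReal.ofReal (2 * (Real.exp (s * S N ω)) ^ 2 + 2 * (g ω) ^ 2) :=
              ENNReal.ofReal_le_ofReal (by nlinarith [sq_nonneg (Real.exp (s * S N ω) - g ω)])
          _ ≤ 2 * ENNReal.ofReal ((Real.exp (s * S N ω)) ^ 2)
              + 2 * ENNReal.ofReal ((g ω) ^ 2) := by
              refine (ENNReal.ofReal_add_le).trans ?_
              refine add_le_add ?_ ?_ <;>
                rw [ENNReal.ofReal_mul (by norm_num : (0:ℝ) ≤ 2)] <;>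
                simp [ENNReal.ofReal_ofNat]
      calc ∫⁻ ω, (ENNReal.ofReal (Real.exp (s * S N ω) + g ω)) ^ (2:ℝ) ∂μ
          ≤ ∫⁻ ω, (2 * ENNReal.ofReal ((Real.exp (s * S N ω)) ^ 2)
              + 2 * ENNReal.ofReal ((g ω) ^ 2)) ∂μ := lintegral_mono heq
        _ = 2 * ∫⁻ ω, ENNReal.ofReal ((Real.exp (s * S N ω)) ^ 2) ∂μ
              + 2 * ∫⁻ ω, ENNReal.ofReal ((g ω) ^ 2) ∂μ := by
            have hm1 : AEMeasurable
                (fun ω => (2:ℝ≥0∞) * ENNReal.ofReal ((Real.exp (s * S N ω)) ^ 2)) μ :=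
              (((((hmeasS N).const_mul s).exp).pow_const 2).ennreal_ofReal).aemeasurable.const_mul 2
            rw [lintegral_add_left' hm1,
              lintegral_const_mul' _ _ (by norm_num),
              lintegral_const_mul' _ _ (by norm_num)]
        _ ≤ 2 * B + 2 * B := add_le_add (mul_le_mul_right (hL2N N) _)
            (mul_le_mul_right hgL2 _)
        _ = (4 : ℝ≥0∞) * B := by ring
    calc ∫⁻ ω, (‖Real.exp (s * S N ω) - g ω‖₊ : ℝ≥0∞) ∂μ
        ≤ (∫⁻ ω, (ENNReal.ofReal (|s| * |F σ ω - S N ω|)) ^ (2:ℝ) ∂μ) ^ (1/2 : ℝ)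
          * (∫⁻ ω, (ENNReal.ofReal (Real.exp (s * S N ω) + g ω)) ^ (2:ℝ) ∂μ) ^ (1/2 : ℝ) :=
          hstep1.trans hstep2
      _ ≤ (ENNReal.ofReal (s ^ 2 * (V σ - ∑ n ∈ Finset.range N, (c n) ^ 2))) ^ (1/2 : ℝ)
          * ((4 : ℝ≥0∞) * B) ^ (1/2 : ℝ) :=
          mul_le_mul' (ENNReal.rpow_le_rpow hstep3 (by norm_num))
            (ENNReal.rpow_le_rpow hstep4 (by norm_num))
  have hDne : ((4 : ℝ≥0∞) * B) ^ (1/2 : ℝ) ≠ ∞ :=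
    ENNReal.rpow_ne_top_of_nonneg (by norm_num)
      (ENNReal.mul_ne_top (by norm_num) hBne)
  have hub : Tendsto (fun N =>
      (ENNReal.ofReal (s ^ 2 * (V σ - ∑ n ∈ Finset.range N, (c n) ^ 2))) ^ (1/2 : ℝ)
        * ((4 : ℝ≥0∞) * B) ^ (1/2 : ℝ)) atTop (𝓝 0) := by
    have h0 : Tendsto (fun N => s ^ 2 * (V σ - ∑ n ∈ Finset.range N, (c n) ^ 2)) atTop
        (𝓝 0) := by
      have hPV0 : Tendsto (fun N => V σ - ∑ n ∈ Finset.range N, (c n) ^ 2) atTop (𝓝 0) := by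
        have := tendsto_const_nhds (x := V σ) (f := atTop (α := ℕ)) |>.sub hPtend
        simpa using this
      have := hPV0.const_mul (s ^ 2)
      simpa using this
    have h1' : Tendsto (fun N => ENNReal.ofReal
        (s ^ 2 * (V σ - ∑ n ∈ Finset.range N, (c n) ^ 2))) atTop (𝓝 0) := by
      have := ENNReal.tendsto_ofReal h0
      simpa using this
    have h2' := h1'.ennrpow_const (1/2 : ℝ)
    rw [ENNReal.zero_rpow_of_pos (by norm_num)] at h2'
    have h3' := ENNReal.Tendsto.mul_const h2' (Or.inr hDne)
    simpa using h3'
  have htendL1 : Tendsto (fun N => ∫⁻ ω, (‖Real.exp (s * S N ω) - g ω‖₊ : ℝ≥0∞) ∂μ) atTop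
      (𝓝 0) :=
    tendsto_of_tendsto_of_tendsto_of_le_of_le' tendsto_const_nhds hub
      (Filter.Eventually.of_forall fun N => zero_le)
      (Filter.Eventually.of_forall hptbound)
  have htendInt : Tendsto (fun N => ∫ ω, Real.exp (s * S N ω) ∂μ) atTop
      (𝓝 (∫ ω, g ω ∂μ)) :=
    tendsto_integral_of_L1 g hgint.aestronglyMeasurable
      (Filter.Eventually.of_forall fun N => hIntegrable s (Finset.range N)) htendL1
  -- rewrite the goal integrand
  have hgoal_eq : ∫ ω, Real.exp (t * (F σ ω / Real.sqrt (V σ))) ∂μ = ∫ ω, g ω ∂μ := by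
    refine integral_congr_ae (Filter.Eventually.of_forall fun ω => ?_)
    show Real.exp (t * (F σ ω / Real.sqrt (V σ))) = Real.exp (s * F σ ω)
    rw [hsdef]
    congr 1
    ring
  rw [hgoal_eq]
  constructor
  · -- lower bound
    have hlow : ∀ N, Real.exp (∑ n ∈ Finset.range N,
        ((s ^ 2 / 2) * (c n) ^ 2 - (s ^ 4 / 8) * (c n) ^ 4))
        ≤ ∫ ω, Real.exp (s * S N ω) ∂μ := by
      intro N
      rw [hInt s N, Real.exp_sum]
      refine Finset.prod_le_prod (fun n _ => (Real.exp_pos _).le) (fun n _ => ?_)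
      have h := exp_le_cosh (s * c n)
      have heq : (s * c n) ^ 2 / 2 - (s * c n) ^ 4 / 8
          = (s ^ 2 / 2) * (c n) ^ 2 - (s ^ 4 / 8) * (c n) ^ 4 := by ring
      rw [heq] at h
      exact h
    have hA : Summable (fun n => (s ^ 2 / 2) * (c n) ^ 2) := hsumc2.mul_left _
    have hBsum : Summable (fun n => (s ^ 4 / 8) * (c n) ^ 4) := hsumc4.mul_left _
    have hsum_tend : Tendsto (fun N => ∑ n ∈ Finset.range N,
        ((s ^ 2 / 2) * (c n) ^ 2 - (s ^ 4 / 8) * (c n) ^ 4)) atTop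
        (𝓝 (s ^ 2 / 2 * V σ - s ^ 4 / 8 * Q)) := by
      have hval : ∑' n, ((s ^ 2 / 2) * (c n) ^ 2 - (s ^ 4 / 8) * (c n) ^ 4)
          = s ^ 2 / 2 * V σ - s ^ 4 / 8 * Q := by
        rw [Summable.tsum_sub hA hBsum, tsum_mul_left, tsum_mul_left, htsum2, hQdef]
      have := (hA.sub hBsum).hasSum.tendsto_sum_nat
      rwa [hval] at this
    have hexp_tend : Tendsto (fun N => Real.exp (∑ n ∈ Finset.range N,
        ((s ^ 2 / 2) * (c n) ^ 2 - (s ^ 4 / 8) * (c n) ^ 4))) atTop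
        (𝓝 (Real.exp (s ^ 2 / 2 * V σ - s ^ 4 / 8 * Q))) :=
      Real.continuous_exp.continuousAt.tendsto.comp hsum_tend
    have hlower_lim : Real.exp (s ^ 2 / 2 * V σ - s ^ 4 / 8 * Q) ≤ ∫ ω, g ω ∂μ :=
      le_of_tendsto_of_tendsto' hexp_tend htendInt hlow
    refine le_trans ?_ hlower_lim
    rw [Real.exp_le_exp]
    have hs4' : s ^ 4 = t ^ 4 / (V σ) ^ 2 := by
      rw [← hs4]
      field_simp
    have h2V : s ^ 2 / 2 * V σ = t ^ 2 / 2 := by rw [← hs2]; ring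
    rw [h2V, hs4']
    have hkey : t ^ 4 / (V σ) ^ 2 / 8 * Q ≤ t ^ 4 * Real.pi ^ 2 / (48 * (V σ) ^ 2) := by
      have hc1 : t ^ 4 / (V σ) ^ 2 / 8 * Q ≤ t ^ 4 / (V σ) ^ 2 / 8 * (Real.pi ^ 2 / 6) :=
        mul_le_mul_of_nonneg_left hQle (by positivity)
      have hc2 : t ^ 4 / (V σ) ^ 2 / 8 * (Real.pi ^ 2 / 6)
          = t ^ 4 * Real.pi ^ 2 / (48 * (V σ) ^ 2) := by ring
      linarith
    linarith
  · -- upper bound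
    refine le_of_tendsto htendInt (Filter.Eventually.of_forall fun N => ?_)
    refine (hUB s N).trans (le_of_eq ?_)
    rw [hs2]
end

section
/- For every real t, lim_{σ→(1/2)^+} E[exp(t·F̄(σ))] = exp(t²/2). -/
open MeasureTheory ProbabilityTheory Filter Topology

lemma aux_one_add_le_cosh (x : ℝ) : 1 + x ^ 2 / 2 ≤ Real.cosh x := by
  rw [Real.cosh_eq_tsum]
  have hsum := x.hasSum_cosh.summable
  have h : ∑ n ∈ Finset.range 2, x ^ (2 * n) / ((2 * n).factorial : ℝ) = 1 + x ^ 2 / 2 := by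
    rw [Finset.sum_range_succ, Finset.sum_range_one]
    norm_num [Nat.factorial]
  rw [← h]
  refine Summable.sum_le_tsum _ (fun n _ => ?_) hsum
  have hx : (0:ℝ) ≤ x ^ (2 * n) := by rw [pow_mul]; positivity
  positivity

lemma aux_exp_quad_le_cosh (x : ℝ) : Real.exp (x ^ 2 / 2 - x ^ 4 / 4) ≤ Real.cosh x := by
  set u := x ^ 2 / 2 with hu
  have hu0 : 0 ≤ u := by positivity
  have hx4 : x ^ 2 / 2 - x ^ 4 / 4 = u - u ^ 2 := by rw [hu]; ring
  have h1 : (0:ℝ) < 1 + u := by linarith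
  have key : u - u ^ 2 ≤ Real.log (1 + u) := by
    have hlog := Real.one_sub_inv_le_log_of_pos h1
    have h2 : u - u ^ 2 ≤ 1 - (1 + u)⁻¹ := by
      have : 1 - (1 + u)⁻¹ = u / (1 + u) := by field_simp; ring
      rw [this, le_div_iff₀ h1]
      nlinarith [pow_nonneg hu0 3]
    linarith
  calc Real.exp (x ^ 2 / 2 - x ^ 4 / 4) = Real.exp (u - u ^ 2) := by rw [hx4]
    _ ≤ 1 + u := by
        rw [← Real.exp_log h1]
        exact Real.exp_le_exp.2 key
    _ ≤ Real.cosh x := aux_one_add_le_cosh x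

lemma ae_pm {Ω : Type*} [MeasurableSpace Ω] (μ : Measure Ω) [IsProbabilityMeasure μ]
    (Y : Ω → ℝ) (hY : Measurable Y)
    (h1 : μ {ω | Y ω = 1} = 1/2) (h2 : μ {ω | Y ω = -1} = 1/2) :
    ∀ᵐ ω ∂μ, Y ω = 1 ∨ Y ω = -1 := by
  have hA : MeasurableSet {ω | Y ω = 1} := hY (measurableSet_singleton 1)
  have hB : MeasurableSet {ω | Y ω = -1} := hY (measurableSet_singleton (-1))
  have hdisj : Disjoint {ω | Y ω = 1} {ω | Y ω = -1} := by
    rw [Set.disjoint_left]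
    rintro ω (h1' : Y ω = 1) (h2' : Y ω = -1)
    rw [h1'] at h2'; norm_num at h2'
  have hunion : μ ({ω | Y ω = 1} ∪ {ω | Y ω = -1}) = 1 := by
    rw [measure_union hdisj hB, h1, h2, ENNReal.add_halves]
  have hc : μ ({ω | Y ω = 1} ∪ {ω | Y ω = -1})ᶜ = 0 :=
    (prob_compl_eq_zero_iff (hA.union hB)).2 hunion
  have hset : {ω | ¬(Y ω = 1 ∨ Y ω = -1)} = ({ω | Y ω = 1} ∪ {ω | Y ω = -1})ᶜ := by
    ext ω; simp [not_or]
  rw [ae_iff, hset]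
  exact hc

lemma integral_exp_two_point {Ω : Type*} [MeasurableSpace Ω] (μ : Measure Ω)
    [IsProbabilityMeasure μ] (Y : Ω → ℝ) (hY : Measurable Y)
    (h1 : μ {ω | Y ω = 1} = 1/2) (h2 : μ {ω | Y ω = -1} = 1/2) (c : ℝ) :
    ∫ ω, Real.exp (c * Y ω) ∂μ = Real.cosh c := by
  set A := {ω | Y ω = 1} with hAdef
  set B := {ω | Y ω = -1} with hBdef
  have hA : MeasurableSet A := hY (measurableSet_singleton 1)
  have hB : MeasurableSet B := hY (measurableSet_singleton (-1))
  have hae := ae_pm μ Y hY h1 h2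
  have heq : (fun ω => Real.exp (c * Y ω)) =ᵐ[μ]
      (fun ω => A.indicator (fun _ => Real.exp c) ω + B.indicator (fun _ => Real.exp (-c)) ω) := by
    filter_upwards [hae] with ω hω
    rcases hω with h | h
    · have hmA : ω ∈ A := h
      have hnB : ω ∉ B := by
        intro hB'
        have : Y ω = -1 := hB'
        rw [h] at this; norm_num at this
      rw [Set.indicator_of_mem hmA, Set.indicator_of_notMem hnB, h, mul_one, add_zero]
    · have hmB : ω ∈ B := h
      have hnA : ω ∉ A := by
        intro hA'
        have : Y ω = 1 := hA'
        rw [h] at this; norm_num at this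
      rw [Set.indicator_of_mem hmB, Set.indicator_of_notMem hnA, h, zero_add, mul_neg_one]
  rw [integral_congr_ae heq, integral_add ((integrable_const _).indicator hA)
    ((integrable_const _).indicator hB), integral_indicator_const _ hA,
    integral_indicator_const _ hB, measureReal_def, measureReal_def, h1, h2, Real.cosh_eq]
  have h12 : (1/2 : ENNReal).toReal = (1/2 : ℝ) := by simp
  rw [h12, smul_eq_mul, smul_eq_mul]
  ring


lemma integral_exp_weighted_sum {Ω : Type*} [MeasurableSpace Ω] (μ : Measure Ω)
    [IsProbabilityMeasure μ] (X : ℕ → Ω → ℝ) (hmeas : ∀ n, Measurable (X n))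
    (hindep : iIndepFun X μ)
    (h1 : ∀ n, μ {ω | X n ω = 1} = 1/2) (h2 : ∀ n, μ {ω | X n ω = -1} = 1/2)
    (a : ℕ → ℝ) (s : ℝ) (N : ℕ) :
    ∫ ω, Real.exp (s * ∑ n ∈ Finset.range N, X n ω * a n) ∂μ
      = ∏ n ∈ Finset.range N, Real.cosh (s * a n) := by
  have hYindep : iIndepFun (fun n ω => X n ω * a n) μ :=
    hindep.comp (fun n x => x * a n) (fun n => measurable_id.mul_const _)
  have h := hYindep.mgf_sum (fun n => (hmeas n).mul_const _) (Finset.range N) (t := s)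
  simp only [mgf, Finset.sum_apply] at h
  rw [h]
  refine Finset.prod_congr rfl (fun n _ => ?_)
  rw [← integral_exp_two_point μ (X n) (hmeas n) (h1 n) (h2 n) (s * a n)]
  congr 1
  funext ω
  congr 1
  ring

lemma key_bounds {Ω : Type*} [MeasurableSpace Ω] (μ : Measure Ω) [IsProbabilityMeasure μ]
    (X : ℕ → Ω → ℝ) (hmeas : ∀ n, Measurable (X n))
    (hindep : iIndepFun X μ)
    (h1 : ∀ n, μ {ω | X n ω = 1} = 1/2) (h2 : ∀ n, μ {ω | X n ω = -1} = 1/2)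
    (F : ℝ → Ω → ℝ) (t σ : ℝ) (hσ : 1/2 < σ)
    (hFσ : ∀ᵐ ω ∂μ, Tendsto (fun N : ℕ => ∑ n ∈ Finset.range N, X n ω * (n : ℝ) ^ (-σ))
        atTop (𝓝 (F σ ω))) :
    Real.exp (t^2/2 - t^4/(4 * V σ)) ≤ ∫ ω, Real.exp (t * (F σ ω / Real.sqrt (V σ))) ∂μ ∧
    ∫ ω, Real.exp (t * (F σ ω / Real.sqrt (V σ))) ∂μ ≤ Real.exp (t^2/2) := by
  -- summability and basic facts about V
  have hsum2 : Summable (fun n : ℕ => (n:ℝ) ^ (-(2*σ))) :=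
    Real.summable_nat_rpow.2 (by linarith)
  have hterm_nonneg : ∀ n : ℕ, 0 ≤ (n:ℝ) ^ (-(2*σ)) := fun n => Real.rpow_nonneg n.cast_nonneg _
  have hV1 : 1 ≤ V σ := by
    have h := Summable.le_tsum hsum2 1 (fun n _ => hterm_nonneg n)
    simpa [V] using h
  have hVpos : 0 < V σ := lt_of_lt_of_le one_pos hV1
  set R := Real.sqrt (V σ) with hRdef
  have hRpos : 0 < R := Real.sqrt_pos.2 hVpos
  have hR2 : R ^ 2 = V σ := Real.sq_sqrt hVpos.le
  set a : ℕ → ℝ := fun n => (n:ℝ) ^ (-σ) / R with hadef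
  have ha2 : ∀ n, (a n)^2 = (n:ℝ) ^ (-(2*σ)) / V σ := by
    intro n
    have hrw : (n:ℝ) ^ (-(2*σ)) = ((n:ℝ) ^ (-σ))^2 := by
      rw [← Real.rpow_natCast ((n:ℝ) ^ (-σ)) 2, ← Real.rpow_mul n.cast_nonneg]
      ring_nf
    simp only [hadef]
    rw [div_pow, hR2, hrw]
  have hsum_a2 : Summable (fun n => (a n)^2) := by
    have := hsum2.div_const (V σ)
    apply this.congr
    intro n
    exact (ha2 n).symm
  have htsum_a2 : ∑' n, (a n)^2 = 1 := by
    simp only [ha2]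
    rw [tsum_div_const]
    exact div_self hVpos.ne'
  have ha2_le : ∀ n : ℕ, (a n)^2 ≤ 1 / V σ := by
    intro n
    rw [ha2]
    have hle1 : (n:ℝ) ^ (-(2*σ)) ≤ 1 := by
      rcases Nat.eq_zero_or_pos n with h0 | h0
      · subst h0
        rw [Nat.cast_zero, Real.zero_rpow (by linarith : -(2*σ) ≠ 0)]
        norm_num
      · exact Real.rpow_le_one_of_one_le_of_nonpos (by exact_mod_cast h0) (by linarith)
    gcongr
  -- partial sums of a^2
  set sN : ℕ → ℝ := fun N => ∑ n ∈ Finset.range N, (a n)^2 with hsNdef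
  have hsN_nonneg : ∀ N, 0 ≤ sN N := fun N => Finset.sum_nonneg (fun n _ => sq_nonneg _)
  have hsN_le : ∀ N, sN N ≤ 1 := by
    intro N
    rw [← htsum_a2]
    exact Summable.sum_le_tsum _ (fun n _ => sq_nonneg _) hsum_a2
  have hsN_tendsto : Tendsto sN atTop (𝓝 1) := by
    rw [← htsum_a2]
    exact hsum_a2.hasSum.tendsto_sum_nat
  have ha4 : ∀ N, ∑ n ∈ Finset.range N, (a n)^4 ≤ 1 / V σ := by
    intro N
    calc ∑ n ∈ Finset.range N, (a n)^4 ≤ ∑ n ∈ Finset.range N, (1 / V σ) * (a n)^2 := by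
          refine Finset.sum_le_sum (fun n _ => ?_)
          have h4 : (a n)^4 = (a n)^2 * (a n)^2 := by ring
          rw [h4, mul_comm (1 / V σ)]
          exact mul_le_mul_of_nonneg_left (ha2_le n) (sq_nonneg _)
      _ = (1 / V σ) * sN N := by rw [← Finset.mul_sum]
      _ ≤ (1 / V σ) * 1 := mul_le_mul_of_nonneg_left (hsN_le N) (by positivity)
      _ = 1 / V σ := mul_one _
  -- products of cosh
  set P : ℝ → ℕ → ℝ := fun s N => ∏ n ∈ Finset.range N, Real.cosh (s * a n) with hPdef
  have hP_ub : ∀ (s : ℝ) (N : ℕ), P s N ≤ Real.exp (s^2/2) := by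
    intro s N
    calc P s N ≤ ∏ n ∈ Finset.range N, Real.exp ((s * a n)^2/2) :=
          Finset.prod_le_prod (fun n _ => (Real.cosh_pos _).le)
            (fun n _ => Real.cosh_le_exp_half_sq _)
      _ = Real.exp (∑ n ∈ Finset.range N, (s * a n)^2/2) := (Real.exp_sum _ _).symm
      _ ≤ Real.exp (s^2/2) := by
          refine Real.exp_le_exp.2 ?_
          have hsum : ∑ n ∈ Finset.range N, (s * a n)^2/2 = s^2/2 * sN N := by
            rw [hsNdef, Finset.mul_sum]
            exact Finset.sum_congr rfl (fun n _ => by ring)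
          rw [hsum]
          nlinarith [hsN_le N, hsN_nonneg N, sq_nonneg s]
  have hP_lb : ∀ N, Real.exp (t^2/2 * sN N - t^4/(4 * V σ)) ≤ P t N := by
    intro N
    calc Real.exp (t^2/2 * sN N - t^4/(4 * V σ))
        ≤ Real.exp (∑ n ∈ Finset.range N, ((t * a n)^2/2 - (t * a n)^4/4)) := by
          refine Real.exp_le_exp.2 ?_
          have hsplit : ∑ n ∈ Finset.range N, ((t * a n)^2/2 - (t * a n)^4/4)
              = t^2/2 * sN N - t^4/4 * ∑ n ∈ Finset.range N, (a n)^4 := by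
            rw [Finset.sum_sub_distrib, hsNdef, Finset.mul_sum, Finset.mul_sum]
            congr 1
            · exact Finset.sum_congr rfl (fun n _ => by ring)
            · exact Finset.sum_congr rfl (fun n _ => by ring)
          rw [hsplit]
          have hquart : t^4/4 * ∑ n ∈ Finset.range N, (a n)^4 ≤ t^4/4 * (1 / V σ) :=
            mul_le_mul_of_nonneg_left (ha4 N) (by positivity)
          have heq4 : t^4/4 * (1 / V σ) = t^4/(4 * V σ) := by
            field_simp
          linarith
      _ = ∏ n ∈ Finset.range N, Real.exp ((t * a n)^2/2 - (t * a n)^4/4) :=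
          Real.exp_sum _ _
      _ ≤ P t N :=
          Finset.prod_le_prod (fun n _ => (Real.exp_pos _).le)
            (fun n _ => aux_exp_quad_le_cosh _)
  -- the partial sum processes
  set S : ℕ → Ω → ℝ := fun N ω => ∑ n ∈ Finset.range N, X n ω * a n with hSdef
  have hSmeas : ∀ N, Measurable (S N) := by
    intro N
    apply Finset.measurable_sum
    intro n _
    exact (hmeas n).mul_const _
  have hmgf : ∀ (s : ℝ) (N : ℕ), ∫ ω, Real.exp (s * S N ω) ∂μ = P s N := by
    intro s N
    exact integral_exp_weighted_sum μ X hmeas hindep h1 h2 a s N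
  have hXpm : ∀ᵐ ω ∂μ, ∀ n, X n ω = 1 ∨ X n ω = -1 := by
    rw [ae_all_iff]
    intro n
    exact ae_pm μ (X n) (hmeas n) (h1 n) (h2 n)
  have hInt : ∀ (s : ℝ) (N : ℕ), Integrable (fun ω => Real.exp (s * S N ω)) μ := by
    intro s N
    refine Integrable.mono' (integrable_const
        (Real.exp (|s| * ∑ n ∈ Finset.range N, |a n|)))
      (((hSmeas N).const_mul s).exp.aestronglyMeasurable) ?_
    filter_upwards [hXpm] with ω hω
    rw [Real.norm_eq_abs, Real.abs_exp]
    refine Real.exp_le_exp.2 ?_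
    have hSbound : |S N ω| ≤ ∑ n ∈ Finset.range N, |a n| := by
      refine (Finset.abs_sum_le_sum_abs _ _).trans ?_
      refine Finset.sum_le_sum (fun n _ => ?_)
      rw [abs_mul]
      rcases hω n with h | h <;> rw [h] <;> simp
    calc s * S N ω ≤ |s * S N ω| := le_abs_self _
      _ = |s| * |S N ω| := abs_mul _ _
      _ ≤ |s| * ∑ n ∈ Finset.range N, |a n| :=
          mul_le_mul_of_nonneg_left hSbound (abs_nonneg _)
  -- a.e. convergence of S N to F σ / R
  have haeconv : ∀ᵐ ω ∂μ, Tendsto (fun N => S N ω) atTop (𝓝 (F σ ω / R)) := by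
    filter_upwards [hFσ] with ω hω
    have hrw : (fun N => S N ω)
        = fun N => (∑ n ∈ Finset.range N, X n ω * (n:ℝ) ^ (-σ)) / R := by
      funext N
      rw [hSdef, Finset.sum_div]
      exact Finset.sum_congr rfl (fun n _ => by rw [hadef]; ring)
    rw [hrw]
    exact hω.div_const R
  set g : Ω → ℝ := fun ω => Real.exp (t * (F σ ω / R)) with hgdef
  have hg_pos : ∀ ω, 0 < g ω := fun ω => Real.exp_pos _
  have hGae : AEMeasurable (fun ω => F σ ω / R) μ :=
    aemeasurable_of_tendsto_metrizable_ae atTop (fun N => (hSmeas N).aemeasurable) haeconv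
  have hg_aem : AEMeasurable g μ :=
    Real.measurable_exp.comp_aemeasurable (hGae.const_mul t)
  have hgm : AEStronglyMeasurable g μ := hg_aem.aestronglyMeasurable
  -- Fatou: upper bound for the lintegral
  have hfatou : ∫⁻ ω, ENNReal.ofReal (g ω) ∂μ ≤ ENNReal.ofReal (Real.exp (t^2/2)) := by
    have hmeas' : ∀ N : ℕ, Measurable (fun ω => ENNReal.ofReal (Real.exp (t * S N ω))) :=
      fun N => ENNReal.measurable_ofReal.comp ((hSmeas N).const_mul t).exp
    have hle : ∫⁻ ω, ENNReal.ofReal (g ω) ∂μ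
        ≤ liminf (fun N => ∫⁻ ω, ENNReal.ofReal (Real.exp (t * S N ω)) ∂μ) atTop := by
      refine le_trans (le_of_eq ?_) (lintegral_liminf_le hmeas')
      refine lintegral_congr_ae ?_
      filter_upwards [haeconv] with ω hω
      have htend : Tendsto (fun N => ENNReal.ofReal (Real.exp (t * S N ω))) atTop
          (𝓝 (ENNReal.ofReal (g ω))) := by
        refine (ENNReal.continuous_ofReal.tendsto _).comp ?_
        exact (Real.continuous_exp.tendsto _).comp (hω.const_mul t)
      exact htend.liminf_eq.symm
    refine hle.trans ?_
    have heval : ∀ N : ℕ, ∫⁻ ω, ENNReal.ofReal (Real.exp (t * S N ω)) ∂μ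
        = ENNReal.ofReal (P t N) := by
      intro N
      rw [← ofReal_integral_eq_lintegral_ofReal (hInt t N)
        (Eventually.of_forall (fun ω => (Real.exp_pos _).le)), hmgf t N]
    simp only [heval]
    calc liminf (fun N => ENNReal.ofReal (P t N)) atTop
        ≤ liminf (fun _ : ℕ => ENNReal.ofReal (Real.exp (t^2/2))) atTop :=
          liminf_le_liminf (Eventually.of_forall
            (fun N => ENNReal.ofReal_le_ofReal (hP_ub t N)))
      _ = ENNReal.ofReal (Real.exp (t^2/2)) := liminf_const _
  have hg_int : Integrable g μ := by
    refine ⟨hgm, ?_⟩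
    rw [hasFiniteIntegral_iff_ofReal (Eventually.of_forall (fun ω => (hg_pos ω).le))]
    exact lt_of_le_of_lt hfatou ENNReal.ofReal_lt_top
  constructor
  · -- lower bound
    refine le_of_forall_pos_le_add ?_
    intro ε hε
    set C := Real.exp (2 * t^2) / ε with hCdef
    have hCpos : 0 < C := by positivity
    have hmin_meas : ∀ N : ℕ,
        AEStronglyMeasurable (fun ω => min (Real.exp (t * S N ω)) C) μ :=
      fun N => (((hSmeas N).const_mul t).exp.min measurable_const).aestronglyMeasurable
    have hmin_bd : ∀ (N : ℕ) (ω : Ω), ‖min (Real.exp (t * S N ω)) C‖ ≤ C := by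
      intro N ω
      rw [Real.norm_eq_abs, abs_of_nonneg (le_min (Real.exp_pos _).le hCpos.le)]
      exact min_le_right _ _
    have hmin_int : ∀ N : ℕ, Integrable (fun ω => min (Real.exp (t * S N ω)) C) μ := by
      intro N
      exact Integrable.mono' (integrable_const C) (hmin_meas N)
        (Eventually.of_forall (hmin_bd N))
    have hmin_lb : ∀ N : ℕ,
        P t N - Real.exp (2 * t^2)/C ≤ ∫ ω, min (Real.exp (t * S N ω)) C ∂μ := by
      intro N
      have hpt : ∀ ω, Real.exp (t * S N ω) - Real.exp (2 * t * S N ω)/C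
          ≤ min (Real.exp (t * S N ω)) C := by
        intro ω
        have he : 0 < Real.exp (t * S N ω) := Real.exp_pos _
        have he2 : Real.exp (2 * t * S N ω) = (Real.exp (t * S N ω))^2 := by
          rw [← Real.exp_nat_mul]
          congr 1
          push_cast
          ring
        rw [he2]
        rcases le_total (Real.exp (t * S N ω)) C with hle | hle
        · rw [min_eq_left hle]
          have : 0 ≤ (Real.exp (t * S N ω))^2 / C := by positivity
          linarith
        · rw [min_eq_right hle]
          have hkey : Real.exp (t * S N ω) ≤ (Real.exp (t * S N ω))^2 / C := by
            rw [le_div_iff₀ hCpos]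
            nlinarith
          linarith
      calc P t N - Real.exp (2 * t^2)/C
          ≤ P t N - P (2*t) N / C := by
            have hP2 : P (2*t) N ≤ Real.exp (2 * t^2) := by
              refine (hP_ub (2*t) N).trans ?_
              apply le_of_eq
              congr 1
              ring
            have hdiv : P (2*t) N / C ≤ Real.exp (2 * t^2) / C :=
              (div_le_div_iff_of_pos_right hCpos).2 hP2
            linarith
        _ = ∫ ω, (Real.exp (t * S N ω) - Real.exp (2 * t * S N ω)/C) ∂μ := by
            rw [integral_sub (hInt t N) ((hInt (2*t) N).div_const C)]
            rw [hmgf t N, integral_div, hmgf (2*t) N]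
        _ ≤ ∫ ω, min (Real.exp (t * S N ω)) C ∂μ :=
            integral_mono ((hInt t N).sub ((hInt (2*t) N).div_const C)) (hmin_int N)
              hpt
    have hDCT : Tendsto (fun N => ∫ ω, min (Real.exp (t * S N ω)) C ∂μ) atTop
        (𝓝 (∫ ω, min (g ω) C ∂μ)) := by
      refine tendsto_integral_of_dominated_convergence (fun _ => C) hmin_meas
        (integrable_const C) (fun N => Eventually.of_forall (hmin_bd N)) ?_
      filter_upwards [haeconv] with ω hω
      exact (((Real.continuous_exp.tendsto _).comp (hω.const_mul t)).min tendsto_const_nhds)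
    have hlim_lb : Real.exp (t^2/2 - t^4/(4 * V σ)) - Real.exp (2 * t^2)/C
        ≤ ∫ ω, min (g ω) C ∂μ := by
      have htendL : Tendsto
          (fun N => Real.exp (t^2/2 * sN N - t^4/(4 * V σ)) - Real.exp (2 * t^2)/C) atTop
          (𝓝 (Real.exp (t^2/2 - t^4/(4 * V σ)) - Real.exp (2 * t^2)/C)) := by
        have hinner : Tendsto (fun N => t^2/2 * sN N - t^4/(4 * V σ)) atTop
            (𝓝 (t^2/2 - t^4/(4 * V σ))) := by
          have := (hsN_tendsto.const_mul (t^2/2)).sub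
            (tendsto_const_nhds (x := t^4/(4 * V σ)))
          simpa using this
        exact ((Real.continuous_exp.tendsto _).comp hinner).sub tendsto_const_nhds
      refine le_of_tendsto_of_tendsto' htendL hDCT (fun N => ?_)
      exact le_trans (by linarith [hP_lb N]) (hmin_lb N)
    have hmin_int_g : Integrable (fun ω => min (g ω) C) μ := by
      refine Integrable.mono' (integrable_const C)
        ((hg_aem.min aemeasurable_const).aestronglyMeasurable) ?_
      refine Eventually.of_forall (fun ω => ?_)
      rw [Real.norm_eq_abs, abs_of_nonneg (le_min (hg_pos ω).le hCpos.le)]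
      exact min_le_right _ _
    have hfinal : ∫ ω, min (g ω) C ∂μ ≤ ∫ ω, g ω ∂μ :=
      integral_mono hmin_int_g hg_int (fun ω => min_le_left _ _)
    have hCε : Real.exp (2 * t^2)/C = ε := by
      rw [hCdef]
      field_simp
    linarith
  · -- upper bound
    rw [integral_eq_lintegral_of_nonneg_ae (Eventually.of_forall (fun ω => (hg_pos ω).le)) hgm]
    calc (∫⁻ ω, ENNReal.ofReal (g ω) ∂μ).toReal
        ≤ (ENNReal.ofReal (Real.exp (t^2/2))).toReal :=
          ENNReal.toReal_mono ENNReal.ofReal_ne_top hfatou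
      _ = Real.exp (t^2/2) := ENNReal.toReal_ofReal (Real.exp_pos _).le

lemma V_tendsto_atTop : Tendsto V (𝓝[>] (1/2 : ℝ)) atTop := by
  rw [tendsto_atTop]
  intro b
  have hharm := Real.tendsto_sum_range_one_div_nat_succ_atTop
  rw [tendsto_atTop] at hharm
  obtain ⟨N, hN⟩ := (hharm (b + 1)).exists
  set gN : ℝ → ℝ := fun τ => ∑ i ∈ Finset.range N, ((i:ℝ)+1) ^ (-(2*τ)) with hgNdef
  have hgc : Continuous gN := by
    apply continuous_finset_sum
    intro i _
    have hpos : (0:ℝ) < (i:ℝ)+1 := by positivity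
    have hrw : (fun τ : ℝ => ((i:ℝ)+1) ^ (-(2*τ)))
        = fun τ => Real.exp (Real.log ((i:ℝ)+1) * (-(2*τ))) := by
      funext τ
      rw [Real.rpow_def_of_pos hpos]
    rw [hrw]
    exact Real.continuous_exp.comp (by continuity)
  have hg_half : gN (1/2) = ∑ i ∈ Finset.range N, (1/((i:ℝ)+1)) := by
    refine Finset.sum_congr rfl (fun i _ => ?_)
    rw [show -(2*(1/2:ℝ)) = -1 by norm_num, Real.rpow_neg_one, one_div]
  have hb1 : b < gN (1/2) := by
    rw [hg_half]
    calc b < b + 1 := by linarith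
      _ ≤ ∑ i ∈ Finset.range N, (1/((i:ℝ)+1)) := by exact_mod_cast hN
  have hev : ∀ᶠ τ in 𝓝 (1/2:ℝ), b < gN τ :=
    (hgc.continuousAt).eventually (eventually_gt_nhds hb1)
  filter_upwards [nhdsWithin_le_nhds hev, self_mem_nhdsWithin] with τ hbτ hτ
  have hτ' : (1/2:ℝ) < τ := hτ
  have hsum2 : Summable (fun n : ℕ => (n:ℝ) ^ (-(2*τ))) :=
    Real.summable_nat_rpow.2 (by linarith)
  have hle : gN τ ≤ V τ := by
    have hstep : gN τ = ∑ n ∈ Finset.range (N+1), (n:ℝ) ^ (-(2*τ)) := by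
      rw [Finset.sum_range_succ']
      rw [Nat.cast_zero, Real.zero_rpow (by linarith : -(2*τ) ≠ 0), add_zero]
      refine Finset.sum_congr rfl (fun i _ => ?_)
      push_cast
      ring_nf
    rw [hstep]
    exact Summable.sum_le_tsum _ (fun n _ => Real.rpow_nonneg n.cast_nonneg _) hsum2
  linarith

/-- For every real `t`, `E[exp(t F̄(σ))] → exp(t²/2)` as `σ → (1/2)⁺`,
where `F̄(σ) = F(σ)/√V(σ)`. -/
theorem mgf_limit_normalized_dirichlet
    {Ω : Type*} [MeasurableSpace Ω] (μ : Measure Ω) [IsProbabilityMeasure μ]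
    (X : ℕ → Ω → ℝ) (hmeas : ∀ n, Measurable (X n))
    (hindep : iIndepFun X μ)
    (h1 : ∀ n, μ {ω | X n ω = 1} = 1/2) (h2 : ∀ n, μ {ω | X n ω = -1} = 1/2)
    (F : ℝ → Ω → ℝ)
    (hF : ∀ σ : ℝ, 1/2 < σ → ∀ᵐ ω ∂μ,
      Tendsto (fun N : ℕ => ∑ n ∈ Finset.range N, X n ω * (n : ℝ) ^ (-σ))
        atTop (𝓝 (F σ ω)))
    (t : ℝ) :
    Tendsto (fun σ : ℝ => ∫ ω, Real.exp (t * (F σ ω / Real.sqrt (V σ))) ∂μ)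
      (𝓝[>] (1/2 : ℝ)) (𝓝 (Real.exp (t ^ 2 / 2))) := by
  have hbounds : ∀ σ : ℝ, σ ∈ Set.Ioi (1/2:ℝ) →
      Real.exp (t^2/2 - t^4/(4 * V σ)) ≤ ∫ ω, Real.exp (t * (F σ ω / Real.sqrt (V σ))) ∂μ ∧
      ∫ ω, Real.exp (t * (F σ ω / Real.sqrt (V σ))) ∂μ ≤ Real.exp (t^2/2) :=
    fun σ hσ => key_bounds μ X hmeas hindep h1 h2 F t σ hσ (hF σ hσ)
  have h4V : Tendsto (fun σ => t^4/(4 * V σ)) (𝓝[>] (1/2:ℝ)) (𝓝 0) :=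
    Tendsto.div_atTop tendsto_const_nhds (V_tendsto_atTop.const_mul_atTop (by norm_num))
  have hl : Tendsto (fun σ => Real.exp (t^2/2 - t^4/(4 * V σ))) (𝓝[>] (1/2:ℝ))
      (𝓝 (Real.exp (t^2/2))) := by
    have hinner : Tendsto (fun σ => t^2/2 - t^4/(4 * V σ)) (𝓝[>] (1/2:ℝ)) (𝓝 (t^2/2)) := by
      have := (tendsto_const_nhds (x := t^2/2) (f := 𝓝[>] (1/2:ℝ))).sub h4V
      simpa using this
    exact (Real.continuous_exp.tendsto _).comp hinner
  refine tendsto_of_tendsto_of_tendsto_of_le_of_le' hl tendsto_const_nhds ?_ ?_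
  · filter_upwards [self_mem_nhdsWithin] with σ hσ
    exact (hbounds σ hσ).1
  · filter_upwards [self_mem_nhdsWithin] with σ hσ
    exact (hbounds σ hσ).2
end

section
/- Let f : (1/2, ∞) → ℝ satisfy f(σ) → +∞ and f(σ)/√V(σ) → 0 as σ → (1/2)^+, and let δ > 0. For σ > 1/2 define h(t) = ∑_{n=1}^∞ tanh(t/(n^σ·√V(σ)))·(1/(n^σ·√V(σ))) for t ≥ 0. Then for any λ > 0 there exists δ₁ > 0 such that for all σ with 0 < σ − 1/2 ≤ δ₁, any t₀ > 0 solving δ·f(σ) = h(t₀) satisfies δ·f(σ) ≤ t₀ ≤ δ·(1+λ)·f(σ). -/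
open Filter Topology

/-- `h σ t = ∑_{n=1}^∞ tanh(t/(n^σ √V(σ))) · (1/(n^σ √V(σ)))`
(the `n = 0` term vanishes). -/
noncomputable def hfun (σ t : ℝ) : ℝ :=
  ∑' n : ℕ, Real.tanh (t / ((n : ℝ) ^ σ * Real.sqrt (V σ))) *
    (1 / ((n : ℝ) ^ σ * Real.sqrt (V σ)))

lemma sinh_le_mul_cosh {x : ℝ} (hx : 0 ≤ x) : Real.sinh x ≤ x * Real.cosh x := by
  have H : MonotoneOn (fun y : ℝ => y * Real.cosh y - Real.sinh y) (Set.Ici 0) := by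
    have hd : ∀ y : ℝ, HasDerivAt (fun y : ℝ => y * Real.cosh y - Real.sinh y)
        (y * Real.sinh y) y := by
      intro y
      have := ((hasDerivAt_id y).mul (Real.hasDerivAt_cosh y)).sub (Real.hasDerivAt_sinh y)
      refine this.congr_deriv ?_; simp only [id_eq]; ring
    apply monotoneOn_of_deriv_nonneg (convex_Ici 0)
    · exact (Continuous.sub (continuous_id.mul Real.continuous_cosh)
        Real.continuous_sinh).continuousOn
    · exact fun y _ => ((hd y).differentiableAt).differentiableWithinAt
    · intro y hy
      rw [(hd y).deriv]
      rw [interior_Ici] at hy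
      exact mul_nonneg (le_of_lt hy) (Real.sinh_nonneg_iff.mpr (le_of_lt hy))
  have := H (Set.self_mem_Ici) hx hx
  simpa using this

lemma tanh_le_self {x : ℝ} (hx : 0 ≤ x) : Real.tanh x ≤ x := by
  rw [Real.tanh_eq_sinh_div_cosh, div_le_iff₀ (Real.cosh_pos x)]
  exact sinh_le_mul_cosh hx

lemma tanh_nonneg' {x : ℝ} (hx : 0 ≤ x) : 0 ≤ Real.tanh x := by
  rw [Real.tanh_eq_sinh_div_cosh]
  exact div_nonneg (Real.sinh_nonneg_iff.mpr hx) (Real.cosh_pos x).le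

lemma tanh_le_tanh' {a b : ℝ} (h : a ≤ b) : Real.tanh a ≤ Real.tanh b := by
  rw [Real.tanh_eq_sinh_div_cosh, Real.tanh_eq_sinh_div_cosh,
    div_le_div_iff₀ (Real.cosh_pos a) (Real.cosh_pos b)]
  have : Real.sinh (a - b) ≤ 0 := Real.sinh_nonpos_iff.mpr (by linarith)
  rw [Real.sinh_sub] at this
  linarith

lemma le_tanh' {x : ℝ} (hx : 0 ≤ x) : x - x ^ 3 / 3 ≤ Real.tanh x := by
  have H : MonotoneOn (fun y : ℝ => Real.sinh y - (y - y ^ 3 / 3) * Real.cosh y)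
      (Set.Ici 0) := by
    have hd : ∀ y : ℝ, HasDerivAt (fun y : ℝ => Real.sinh y - (y - y ^ 3 / 3) * Real.cosh y)
        (y ^ 2 * Real.cosh y - (y - y ^ 3 / 3) * Real.sinh y) y := by
      intro y
      have h1 : HasDerivAt (fun y : ℝ => y - y ^ 3 / 3) (1 - y ^ 2) y := by
        have := ((hasDerivAt_pow 3 y).div_const 3)
        have := (hasDerivAt_id y).sub this
        refine this.congr_deriv ?_; push_cast; ring
      have := (Real.hasDerivAt_sinh y).sub (h1.mul (Real.hasDerivAt_cosh y))
      refine this.congr_deriv ?_; ring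
    apply monotoneOn_of_deriv_nonneg (convex_Ici 0)
    · exact (Real.continuous_sinh.sub ((continuous_id.sub ((continuous_pow 3).div_const 3)).mul
        Real.continuous_cosh)).continuousOn
    · exact fun y _ => ((hd y).differentiableAt).differentiableWithinAt
    · intro y hy
      rw [(hd y).deriv]
      rw [interior_Ici] at hy
      have hy0 : (0:ℝ) ≤ y := hy.le
      have h1 : Real.sinh y ≤ y * Real.cosh y := sinh_le_mul_cosh hy0
      have h2 : 0 ≤ Real.sinh y := Real.sinh_nonneg_iff.mpr hy0
      have h3 : 0 < Real.cosh y := Real.cosh_pos y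
      rcases le_or_gt (y - y ^ 3 / 3) 0 with h | h
      · nlinarith
      · have h4 : (y - y ^ 3 / 3) * Real.sinh y ≤ (y - y ^ 3 / 3) * (y * Real.cosh y) :=
          mul_le_mul_of_nonneg_left h1 h.le
        nlinarith [mul_nonneg (pow_nonneg hy0 4) h3.le]
  have := H (Set.self_mem_Ici) hx hx
  simp only [Real.sinh_zero, Real.cosh_zero] at this
  rw [Real.tanh_eq_sinh_div_cosh, le_div_iff₀ (Real.cosh_pos x)]
  nlinarith [this]

lemma summable_rpow' {σ : ℝ} (hσ : 1/2 < σ) :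
    Summable (fun n : ℕ => (n : ℝ) ^ (-(2*σ))) :=
  Real.summable_nat_rpow.mpr (by linarith)

lemma V_ge_one {σ : ℝ} (hσ : 1/2 < σ) : 1 ≤ V σ := by
  have h := Summable.le_tsum (summable_rpow' hσ) 1
    (fun j _ => Real.rpow_nonneg (Nat.cast_nonneg j) _)
  simpa [V] using h

lemma sq_term {σ : ℝ} (hσ : 1/2 < σ) (n : ℕ) :
    (1 / ((n : ℝ) ^ σ * Real.sqrt (V σ)))^2 = (n : ℝ) ^ (-(2*σ)) / V σ := by
  have hσ0 : σ ≠ 0 := by linarith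
  have hV : (0:ℝ) < V σ := lt_of_lt_of_le one_pos (V_ge_one hσ)
  rcases Nat.eq_zero_or_pos n with rfl | hn
  · simp [Real.zero_rpow hσ0, Real.zero_rpow (show -(2*σ) ≠ 0 by intro h; apply hσ0; linarith)]
  · have hn0 : (0:ℝ) < (n:ℝ) := by exact_mod_cast hn
    have h2 : (n:ℝ) ^ (2*σ) = ((n:ℝ) ^ σ)^2 := by
      rw [mul_comm, Real.rpow_mul (Nat.cast_nonneg n)]
      norm_num
    rw [Real.rpow_neg (Nat.cast_nonneg n), h2, div_pow, one_pow, mul_pow,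
      Real.sq_sqrt hV.le]
    rw [inv_eq_one_div, div_div]

/-- If `f(σ) → ∞` and `f(σ)/√V(σ) → 0` as `σ → (1/2)⁺` and `δ > 0`, then for any `λ > 0`
there is `δ₁ > 0` such that for `0 < σ - 1/2 ≤ δ₁`, any `t₀ > 0` solving
`δ f(σ) = h(t₀)` satisfies `δ f(σ) ≤ t₀ ≤ δ (1+λ) f(σ)`. -/
theorem t0_bounds
    (f : ℝ → ℝ)
    (hf_top : Tendsto f (𝓝[>] (1/2 : ℝ)) atTop)
    (hf_small : Tendsto (fun σ => f σ / Real.sqrt (V σ)) (𝓝[>] (1/2 : ℝ)) (𝓝 0))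
    (δ : ℝ) (hδ : 0 < δ) :
    ∀ lam > (0 : ℝ), ∃ δ₁ > (0 : ℝ),
      ∀ σ : ℝ, 1/2 < σ → σ - 1/2 ≤ δ₁ →
        ∀ t₀ : ℝ, 0 < t₀ → δ * f σ = hfun σ t₀ →
          δ * f σ ≤ t₀ ∧ t₀ ≤ δ * (1 + lam) * f σ := by
  intro lam hlam
  set c : ℝ := Real.sqrt (lam/(1+lam)) / (δ*(1+lam)) with hc_def
  have hc : 0 < c := by
    apply div_pos (Real.sqrt_pos.mpr (by positivity)) (by positivity)
  have hev : ∀ᶠ σ in 𝓝[>] (1/2:ℝ), |f σ / Real.sqrt (V σ)| < c ∧ 1 ≤ f σ := by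
    have h1 : ∀ᶠ σ in 𝓝[>] (1/2:ℝ), |f σ / Real.sqrt (V σ)| < c := by
      have := hf_small.eventually (eventually_abs_sub_lt 0 hc)
      simpa using this
    exact h1.and (hf_top.eventually_ge_atTop 1)
  obtain ⟨ε, hε, hball⟩ := Metric.mem_nhdsWithin_iff.mp hev
  refine ⟨ε/2, by positivity, ?_⟩
  intro σ hσ hσ2 t₀ ht₀ heq
  have hmem : σ ∈ Metric.ball (1/2:ℝ) ε ∩ Set.Ioi (1/2:ℝ) := by
    constructor
    · rw [Metric.mem_ball, Real.dist_eq, abs_of_pos (by linarith)]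
      linarith
    · exact hσ
  obtain ⟨habs, hf1⟩ := hball hmem
  -- setup
  have hV : (0:ℝ) < V σ := lt_of_lt_of_le one_pos (V_ge_one hσ)
  set s : ℝ := Real.sqrt (V σ) with hs_def
  have hs : 0 < s := Real.sqrt_pos.mpr hV
  set b : ℕ → ℝ := fun n => 1 / ((n : ℝ) ^ σ * s) with hb_def
  have hbnn : ∀ n, 0 ≤ b n := fun n => by
    apply div_nonneg zero_le_one
    exact mul_nonneg (Real.rpow_nonneg (Nat.cast_nonneg n) σ) hs.le
  have hb2 : ∀ n, (b n)^2 = (n : ℝ) ^ (-(2*σ)) / V σ := fun n => sq_term hσ n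
  have hsq_sum : Summable (fun n => (b n)^2) := by
    simp_rw [hb2]
    exact (summable_rpow' hσ).div_const _
  have hsum_sq : ∑' n, (b n)^2 = 1 := by
    simp_rw [hb2]
    rw [tsum_div_const]
    exact div_self hV.ne'
  have hble : ∀ n, (b n)^2 ≤ 1 / V σ := by
    intro n
    rw [hb2]
    have h1 : (n:ℝ)^(-(2*σ)) ≤ 1 := by
      rcases Nat.eq_zero_or_pos n with rfl | hn
      · rw [Nat.cast_zero, Real.zero_rpow (by intro h; nlinarith [h] : -(2*σ) ≠ 0)]
        norm_num
      · exact Real.rpow_le_one_of_one_le_of_nonpos (by exact_mod_cast hn) (by linarith)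
    exact div_le_div_of_nonneg_right h1 hV.le |>.trans_eq rfl
  -- term rewriting: t / (n^σ s) = t * b n
  have hdiv : ∀ (t : ℝ) (n : ℕ), t / ((n:ℝ)^σ * s) = t * b n := fun t n =>
    div_eq_mul_one_div t ((n:ℝ)^σ * s)
  -- upper bound on hfun: hfun σ t ≤ t for t ≥ 0
  have hterm_le : ∀ t : ℝ, 0 ≤ t → ∀ n : ℕ,
      Real.tanh (t / ((n:ℝ)^σ * s)) * b n ≤ t * (b n)^2 := by
    intro t ht n
    rw [hdiv]
    have := tanh_le_self (mul_nonneg ht (hbnn n))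
    calc Real.tanh (t * b n) * b n ≤ (t * b n) * b n :=
          mul_le_mul_of_nonneg_right this (hbnn n)
      _ = t * (b n)^2 := by ring
  have hterm_nn : ∀ t : ℝ, 0 ≤ t → ∀ n : ℕ,
      0 ≤ Real.tanh (t / ((n:ℝ)^σ * s)) * b n := by
    intro t ht n
    exact mul_nonneg (tanh_nonneg' (by rw [hdiv]; exact mul_nonneg ht (hbnn n))) (hbnn n)
  have hsummable : ∀ t : ℝ, 0 ≤ t →
      Summable (fun n : ℕ => Real.tanh (t / ((n:ℝ)^σ * s)) * b n) := by
    intro t ht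
    exact Summable.of_nonneg_of_le (hterm_nn t ht) (hterm_le t ht) (hsq_sum.mul_left t)
  have hfun_eq : ∀ t : ℝ, hfun σ t = ∑' n : ℕ, Real.tanh (t / ((n:ℝ)^σ * s)) * b n := fun t => rfl
  have hfun_le : ∀ t : ℝ, 0 ≤ t → hfun σ t ≤ t := by
    intro t ht
    rw [hfun_eq]
    calc (∑' n : ℕ, Real.tanh (t / ((n:ℝ)^σ * s)) * b n)
        ≤ ∑' n, t * (b n)^2 :=
          Summable.tsum_le_tsum (hterm_le t ht) (hsummable t ht) (hsq_sum.mul_left t)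
      _ = t * ∑' n, (b n)^2 := tsum_mul_left
      _ = t := by rw [hsum_sq, mul_one]
  -- lower bound of the pair
  have hlow : δ * f σ ≤ t₀ := heq ▸ hfun_le t₀ ht₀.le
  refine ⟨hlow, ?_⟩
  -- upper bound: by contradiction
  by_contra hcon
  push_neg at hcon
  set u : ℝ := δ * (1 + lam) * f σ with hu_def
  have hfpos : (0:ℝ) < f σ := lt_of_lt_of_le one_pos hf1
  have hu : 0 < u := by positivity
  -- hfun monotone : hfun σ u ≤ hfun σ t₀
  have hmono : hfun σ u ≤ hfun σ t₀ := by
    rw [hfun_eq, hfun_eq]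
    apply Summable.tsum_le_tsum ?_ (hsummable u hu.le) (hsummable t₀ ht₀.le)
    intro n
    apply mul_le_mul_of_nonneg_right ?_ (hbnn n)
    apply tanh_le_tanh'
    rw [hdiv, hdiv]
    exact mul_le_mul_of_nonneg_right hcon.le (hbnn n)
  -- summability of b^4
  have hb4_le : ∀ n, (b n)^4 ≤ (1 / V σ) * (b n)^2 := by
    intro n
    have : (b n)^4 = (b n)^2 * (b n)^2 := by ring
    rw [this]
    exact mul_le_mul_of_nonneg_right (hble n) (sq_nonneg _)
  have hb4_sum : Summable (fun n => (b n)^4) :=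
    Summable.of_nonneg_of_le (fun n => by positivity) hb4_le (hsq_sum.mul_left _)
  have hQ : ∑' n, (b n)^4 ≤ 1 / V σ := by
    calc (∑' n, (b n)^4) ≤ ∑' n, (1 / V σ) * (b n)^2 :=
          Summable.tsum_le_tsum hb4_le hb4_sum (hsq_sum.mul_left _)
      _ = (1 / V σ) * ∑' n, (b n)^2 := tsum_mul_left
      _ = 1 / V σ := by rw [hsum_sq, mul_one]
  have hQnn : 0 ≤ ∑' n, (b n)^4 := tsum_nonneg (fun n => by positivity)
  -- lower bound on hfun σ u
  have hfun_ge : u - u^3/3 * (1 / V σ) ≤ hfun σ u := by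
    have hterm_ge : ∀ n : ℕ, u * (b n)^2 - u^3/3 * (b n)^4 ≤
        Real.tanh (u / ((n:ℝ)^σ * s)) * b n := by
      intro n
      rw [hdiv]
      have h := le_tanh' (mul_nonneg hu.le (hbnn n))
      have := mul_le_mul_of_nonneg_right h (hbnn n)
      calc u * (b n)^2 - u^3/3 * (b n)^4
          = (u * b n - (u * b n)^3/3) * b n := by ring
        _ ≤ Real.tanh (u * b n) * b n := this
    have hsum_lhs : Summable (fun n => u * (b n)^2 - u^3/3 * (b n)^4) :=
      (hsq_sum.mul_left u).sub (hb4_sum.mul_left _)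
    rw [hfun_eq]
    calc u - u^3/3 * (1 / V σ)
        ≤ u * (∑' n, (b n)^2) - u^3/3 * ∑' n, (b n)^4 := by
          rw [hsum_sq, mul_one]
          have : u^3/3 * (∑' n, (b n)^4) ≤ u^3/3 * (1 / V σ) :=
            mul_le_mul_of_nonneg_left hQ (by positivity)
          linarith
      _ = ∑' n, (u * (b n)^2 - u^3/3 * (b n)^4) := by
          rw [Summable.tsum_sub (hsq_sum.mul_left u) (hb4_sum.mul_left _), tsum_mul_left, tsum_mul_left]
      _ ≤ ∑' n : ℕ, Real.tanh (u / ((n:ℝ)^σ * s)) * b n :=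
          Summable.tsum_le_tsum hterm_ge hsum_lhs (hsummable u hu.le)
  -- the equation and arithmetic contradiction
  have hval : hfun σ t₀ = u / (1 + lam) := by
    rw [← heq, hu_def]; field_simp
  have hchain : u - u^3/3 * (1 / V σ) ≤ u / (1 + lam) := by
    rw [← hval]; exact hfun_ge.trans hmono
  -- bound u^2 / V
  have hFs : f σ < c * s := by
    have : f σ / s < c := lt_of_abs_lt habs
    calc f σ = (f σ / s) * s := by field_simp
      _ < c * s := by exact mul_lt_mul_of_pos_right this hs
  have hc2 : c^2 = (lam/(1+lam)) / (δ*(1+lam))^2 := by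
    rw [hc_def, div_pow, Real.sq_sqrt (by positivity)]
  have hs2 : s^2 = V σ := Real.sq_sqrt hV.le
  have hu2 : u^2 ≤ (lam/(1+lam)) * V σ := by
    have h1 : u^2 ≤ (δ*(1+lam))^2 * (c*s)^2 := by
      rw [hu_def]
      have : (δ * (1+lam) * f σ)^2 = (δ*(1+lam))^2 * (f σ)^2 := by ring
      rw [this]
      apply mul_le_mul_of_nonneg_left ?_ (by positivity)
      exact pow_le_pow_left₀ hfpos.le hFs.le 2
    calc u^2 ≤ (δ*(1+lam))^2 * (c*s)^2 := h1
      _ = (δ*(1+lam))^2 * c^2 * s^2 := by ring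
      _ = (lam/(1+lam)) * V σ := by
          rw [hc2, hs2]; field_simp
  -- conclude
  have h3 : u^3/3 * (1 / V σ) ≤ u * (lam/(1+lam)) / 3 := by
    have : u^3/3 * (1 / V σ) = u * (u^2 / V σ) / 3 := by field_simp
    rw [this]
    have hu2' : u^2 / V σ ≤ lam/(1+lam) := by
      rw [div_le_iff₀ hV]; linarith
    have := mul_le_mul_of_nonneg_left hu2' hu.le
    linarith
  have hfinal : u - u * (lam/(1+lam)) / 3 ≤ u / (1 + lam) := by linarith
  have h1p : (0:ℝ) < 1 + lam := by linarith
  have key := mul_le_mul_of_nonneg_right hfinal (by positivity : (0:ℝ) ≤ 3*(1+lam))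
  have e1 : (u - u * (lam/(1+lam))/3) * (3*(1+lam)) = 3*u*(1+lam) - u*lam := by
    field_simp
  have e2 : u/(1+lam) * (3*(1+lam)) = 3*u := by field_simp
  rw [e1, e2] at key
  nlinarith [mul_pos hu hlam]
end
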